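/- The upper and lower bounds of the work deficit density are continuous in the state with respect to trace distance: if ‖ρ − ρ′‖_tr ≤ ν then |U_l(ρ) − U_l(ρ′)| ≤ Õ(ν) and |L_l(ρ) − L_l(ρ′)| ≤ Õ(ν), where Õ(ν) denotes O(ν ln ν). -/

import Mathlib

noncomputable section
open scoped BigOperators ComplexOrder

/-- Shannon entropy (natural logarithm), with the convention `0 * log 0 = 0`. -/
def shannon {α : Type*} [Fintype α] (p : α → ℝ) : ℝ := -∑ y, p y * Real.log (p y)

/-- `B` lists the members of an orthonormal basis of `ℂ^d` (the rows `B a` are the basis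
vectors). -/
def ONB {d : ℕ} (B : Fin d → Fin d → ℂ) : Prop :=
  ∀ a b, (∑ i, (starRingEnd ℂ) (B a i) * B b i) = if a = b then 1 else 0

/-- Von Neumann entropy (natural logarithm) of a Hermitian matrix, defined through its
eigenvalues; junk value `0` on non-Hermitian input. -/
def vN {n : Type*} [Fintype n] [DecidableEq n] (ρ : Matrix n n ℂ) : ℝ :=
  if h : ρ.IsHermitian then -∑ i, h.eigenvalues i * Real.log (h.eigenvalues i) else 0

/-- `ρ` is a density matrix. -/
def IsDensity {n : Type*} [Fintype n] [DecidableEq n] (ρ : Matrix n n ℂ) : Prop :=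
  ρ.PosSemidef ∧ ρ.trace = 1

/-- Born-rule joint outcome distribution of the non-adaptive local rank-one projective
measurement with per-party orthonormal bases `B n`, applied to the `N`-party state `ρ`
(each party being `d`-dimensional): `P(Y) = Tr[(Π_{y₁} ⊗ ⋯ ⊗ Π_{y_N}) ρ]`. -/
def locProb {N d : ℕ} (ρ : Matrix (Fin N → Fin d) (Fin N → Fin d) ℂ)
    (B : Fin N → Fin d → Fin d → ℂ) (y : Fin N → Fin d) : ℝ :=
  (∑ s, ∑ t, (∏ n, B n (y n) (s n) * (starRingEnd ℂ) (B n (y n) (t n))) * ρ t s).re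

/-- The multipartite (zero-way) work deficit
`Δ(ρ) = min_{Λ ∈ M_N} H_Λ(Y_N) − S(ρ)`. -/
def deficit {N d : ℕ} (ρ : Matrix (Fin N → Fin d) (Fin N → Fin d) ℂ) : ℝ :=
  sInf {h : ℝ | ∃ B : Fin N → Fin d → Fin d → ℂ,
    (∀ n, ONB (B n)) ∧ h = shannon (locProb ρ B)} - vN ρ

/-- The `l`-site segment of parties starting at position `m*l`
(parties `n` with `m*l ≤ n < m*l + l`). -/
def seg (N m l : ℕ) : Finset (Fin N) :=
  Finset.univ.filter (fun i => m * l ≤ i.val ∧ i.val < m * l + l)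

/-- Born-rule probability of the outcome `y` when the parties in `A` are measured in the local
orthonormal bases `B n` (and nothing is done to the other parties):
`p(y) = Tr[(⊗_{n ∈ A} Π_{y_n} ⊗ 1) ρ]`.  Only the values of `y` on `A` matter. -/
def segProb {N d : ℕ} (ρ : Matrix (Fin N → Fin d) (Fin N → Fin d) ℂ)
    (A : Finset (Fin N)) (B : Fin N → Fin d → Fin d → ℂ) (y : Fin N → Fin d) : ℝ :=
  (∑ s, ∑ t, (∏ n, if n ∈ A then B n (y n) (s n) * (starRingEnd ℂ) (B n (y n) (t n))
      else if s n = t n then (1 : ℂ) else 0) * ρ t s).re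

/-- The outcome distribution of measuring the parties in `A`, recorded as a distribution over
all outcome functions by pinning the outcomes outside `A` to `0`. -/
def segDist {N d : ℕ} [NeZero d] (ρ : Matrix (Fin N → Fin d) (Fin N → Fin d) ℂ)
    (A : Finset (Fin N)) (B : Fin N → Fin d → Fin d → ℂ) (y : Fin N → Fin d) : ℝ :=
  if ∀ n, n ∉ A → y n = 0 then segProb ρ A B y else 0

/-- The upper bound `U_l = (1/N){∑_{n ∈ I_l} min_{Λ ∈ M_{n:l}} H_Λ(Y_{n:l}) − S(ρ)}` for the
work deficit density. -/
def Ubound {N d : ℕ} [NeZero d] (ρ : Matrix (Fin N → Fin d) (Fin N → Fin d) ℂ)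
    (l : ℕ) : ℝ :=
  (1 / (N : ℝ)) * ((∑ m ∈ Finset.range (N / l),
    sInf {h : ℝ | ∃ B : Fin N → Fin d → Fin d → ℂ,
      (∀ n, ONB (B n)) ∧ h = shannon (segDist ρ (seg N m l) B)}) - vN ρ)

/-- `E` is a POVM: positive semidefinite operators summing to the identity. -/
def IsPOVM {ι α : Type*} [Fintype ι] [Fintype α] [DecidableEq α]
    (E : ι → Matrix α α ℂ) : Prop :=
  (∀ z, (E z).PosSemidef) ∧ (∑ z, E z) = 1

/-- Joint Born-rule probability of outcomes `(z, y)` for a protocol in `N_{n:l}`: an arbitrary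
POVM `E` (with outcome `z`) on the prefix parties `{a_i : i < m*l}` together with local
rank-one projective measurements `B` on the segment parties `{a_i : m*l ≤ i < m*l + l}`. -/
def prefSegProb {N d : ℕ} (ρ : Matrix (Fin N → Fin d) (Fin N → Fin d) ℂ) (m l : ℕ)
    {Z : Type} [Fintype Z]
    (E : Z → Matrix (Fin (min (m * l) N) → Fin d) (Fin (min (m * l) N) → Fin d) ℂ)
    (B : Fin N → Fin d → Fin d → ℂ) (z : Z) (y : Fin N → Fin d) : ℝ :=
  (∑ s, ∑ t, E z (fun i => s (Fin.castLE (Nat.min_le_right _ _) i))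
      (fun i => t (Fin.castLE (Nat.min_le_right _ _) i)) *
      (∏ n, if n ∈ seg N m l then B n (y n) (s n) * (starRingEnd ℂ) (B n (y n) (t n))
        else if n.val < m * l then (1 : ℂ) else if s n = t n then (1 : ℂ) else 0) * ρ t s).re

/-- Joint outcome distribution of a protocol in `N_{n:l}`, with segment-external projective
outcomes pinned to `0`. -/
def prefSegDist {N d : ℕ} [NeZero d] (ρ : Matrix (Fin N → Fin d) (Fin N → Fin d) ℂ)
    (m l : ℕ) {Z : Type} [Fintype Z]
    (E : Z → Matrix (Fin (min (m * l) N) → Fin d) (Fin (min (m * l) N) → Fin d) ℂ)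
    (B : Fin N → Fin d → Fin d → ℂ) (zy : Z × (Fin N → Fin d)) : ℝ :=
  if ∀ n, n ∉ seg N m l → zy.2 n = 0 then prefSegProb ρ m l E B zy.1 zy.2 else 0

/-- Conditional Shannon entropy `H(Y|Z) = H(Z,Y) − H(Z)` of a joint distribution. -/
def condShannon {Z Y' : Type*} [Fintype Z] [Fintype Y'] (p : Z × Y' → ℝ) : ℝ :=
  shannon p - shannon (fun z => ∑ y, p (z, y))

/-- The lower bound `L_l = (1/N){∑_{n ∈ I_l} min_{Λ ∈ N_{n:l}} H_Λ(Y_{n:l}|Z_n) − S(ρ)}` for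
the work deficit density. -/
def Lbound {N d : ℕ} [NeZero d] (ρ : Matrix (Fin N → Fin d) (Fin N → Fin d) ℂ)
    (l : ℕ) : ℝ :=
  (1 / (N : ℝ)) * ((∑ m ∈ Finset.range (N / l),
    sInf {h : ℝ | ∃ (Z : Type) (_ : Fintype Z)
      (E : Z → Matrix (Fin (min (m * l) N) → Fin d) (Fin (min (m * l) N) → Fin d) ℂ)
      (B : Fin N → Fin d → Fin d → ℂ),
      IsPOVM E ∧ (∀ n, ONB (B n)) ∧
      h = condShannon (prefSegDist ρ m l E B)}) - vN ρ)

/-- Trace norm of a Hermitian matrix (sum of the absolute values of its eigenvalues);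
junk value `0` on non-Hermitian input. -/
def trNorm {n : Type*} [Fintype n] [DecidableEq n] (A : Matrix n n ℂ) : ℝ :=
  if h : A.IsHermitian then ∑ i, |h.eigenvalues i| else 0


namespace WD


def psiF (t : ℝ) : ℝ := t * (2 - Real.log t)

lemma log_le_two {t : ℝ} (h0 : 0 ≤ t) (ht : t ≤ 2) : Real.log t ≤ 2 := by
  rcases eq_or_lt_of_le h0 with rfl | h
  · simp
  · calc Real.log t ≤ t - 1 := Real.log_le_sub_one_of_pos h
      _ ≤ 2 := by linarith

lemma psiF_nonneg {t : ℝ} (h0 : 0 ≤ t) (h2 : t ≤ 2) : 0 ≤ psiF t := by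
  have := log_le_two h0 h2
  have : (0:ℝ) ≤ 2 - Real.log t := by linarith
  exact mul_nonneg h0 this

lemma psiF_mono {a b : ℝ} (ha : 0 ≤ a) (hab : a ≤ b) (hb : b ≤ 2) : psiF a ≤ psiF b := by
  rcases eq_or_lt_of_le ha with rfl | ha0
  · simpa [psiF] using psiF_nonneg (le_trans ha hab) hb
  rcases eq_or_lt_of_le hab with rfl | hab0
  · exact le_rfl
  have hb0 : 0 < b := lt_of_lt_of_le ha0 hab
  -- need: b log b - a log a ≤ 2 (b - a)
  have h1 : Real.log b - Real.log a ≤ b / a - 1 := by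
    rw [← Real.log_div (ne_of_gt hb0) (ne_of_gt ha0)]
    exact Real.log_le_sub_one_of_pos (div_pos hb0 ha0)
  have h2 : Real.log b ≤ 1 := by
    calc Real.log b ≤ b - 1 := Real.log_le_sub_one_of_pos hb0
      _ ≤ 1 := by linarith
  have key : b * Real.log b - a * Real.log a ≤ 2 * (b - a) := by
    have : a * (Real.log b - Real.log a) ≤ b - a := by
      have := mul_le_mul_of_nonneg_left h1 ha0.le
      calc a * (Real.log b - Real.log a) ≤ a * (b / a - 1) := this
        _ = b - a := by field_simp
    nlinarith [mul_le_mul_of_nonneg_left h2 (by linarith : (0:ℝ) ≤ b - a)]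
  simp only [psiF]; nlinarith

lemma psiF_concave : ConcaveOn ℝ (Set.Ici 0) psiF := by
  have h1 : ConcaveOn ℝ (Set.Ici (0:ℝ)) (fun t => Real.negMulLog t + 2 * t) := by
    refine Real.concaveOn_negMulLog.add ?_
    exact (LinearMap.lsmul ℝ ℝ 2).concaveOn (convex_Ici 0)
  convert h1 using 1
  funext t; simp [psiF, Real.negMulLog]; ring

lemma psiF_jensen {ι : Type*} [Fintype ι] (w x : ι → ℝ) (hw : ∀ i, 0 ≤ w i)
    (hw1 : ∑ i, w i = 1) (hx : ∀ i, 0 ≤ x i) :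
    ∑ i, w i * psiF (x i) ≤ psiF (∑ i, w i * x i) := by
  have := psiF_concave.le_map_sum (t := Finset.univ) (w := w) (p := x)
    (fun i _ => hw i) hw1 (fun i _ => hx i)
  simpa [smul_eq_mul] using this

lemma mul_log_diff_le_aux {x y : ℝ} (hy0 : 0 ≤ y) (hyx : y ≤ x) (hx1 : x ≤ 1) :
    |x * Real.log x - y * Real.log y| ≤ (x - y) * (1 - Real.log (x - y)) := by
  rcases eq_or_lt_of_le hyx with rfl | hlt
  · simp
  set ε := x - y with hε
  have hε0 : 0 < ε := by simp [hε]; linarith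
  have hx0 : 0 < x := lt_of_le_of_lt hy0 hlt
  have hlogx : Real.log x ≤ 0 := Real.log_nonpos hx0.le hx1
  have hlogε : Real.log ε ≤ 0 := Real.log_nonpos hε0.le (by linarith)
  have hlogεx : Real.log ε ≤ Real.log x := Real.log_le_log hε0 (by linarith)
  have upper : x * Real.log x - y * Real.log y ≤ ε := by
    rcases eq_or_lt_of_le hy0 with rfl | hy0'
    · simp; nlinarith
    have h1 : Real.log x - Real.log y ≤ x / y - 1 := by
      rw [← Real.log_div (ne_of_gt hx0) (ne_of_gt hy0')]
      exact Real.log_le_sub_one_of_pos (div_pos hx0 hy0')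
    have h2 : y * (Real.log x - Real.log y) ≤ ε := by
      calc y * (Real.log x - Real.log y) ≤ y * (x / y - 1) :=
            mul_le_mul_of_nonneg_left h1 hy0'.le
        _ = ε := by field_simp; exact hε.symm
    nlinarith
  have lower : ε * Real.log ε ≤ x * Real.log x - y * Real.log y := by
    rcases eq_or_lt_of_le hy0 with rfl | hy0'
    · simp; nlinarith
    have h1 : Real.log y ≤ Real.log x := Real.log_le_log hy0' hyx
    have h2 : ε * Real.log ε ≤ ε * Real.log x := mul_le_mul_of_nonneg_left hlogεx hε0.le
    nlinarith
  rw [abs_le]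
  constructor <;> nlinarith

lemma mul_log_diff_le {x y : ℝ} (hx0 : 0 ≤ x) (hx1 : x ≤ 1) (hy0 : 0 ≤ y) (hy1 : y ≤ 1) :
    |x * Real.log x - y * Real.log y| ≤ psiF |x - y| := by
  have key : ∀ a b : ℝ, 0 ≤ b → b ≤ a → a ≤ 1 →
      |a * Real.log a - b * Real.log b| ≤ psiF |a - b| := by
    intro a b h1 h2 h3
    have := mul_log_diff_le_aux h1 h2 h3
    have hab : 0 ≤ a - b := by linarith
    rw [abs_of_nonneg hab]
    calc |a * Real.log a - b * Real.log b| ≤ (a-b) * (1 - Real.log (a-b)) := this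
      _ ≤ psiF (a-b) := by simp only [psiF]; nlinarith
  rcases le_total y x with h | h
  · exact key x y hy0 h hx1
  · rw [abs_sub_comm, abs_sub_comm x y]; exact key y x hx0 h hy1

lemma entry_le_one {α : Type*} [Fintype α] {p : α → ℝ} (h0 : ∀ i, 0 ≤ p i)
    (h1 : ∑ i, p i = 1) (j : α) : p j ≤ 1 := by
  rw [← h1]
  exact Finset.single_le_sum (fun i _ => h0 i) (Finset.mem_univ j)

lemma shannon_nonneg {α : Type*} [Fintype α] {p : α → ℝ} (h0 : ∀ i, 0 ≤ p i)
    (h1 : ∀ i, p i ≤ 1) : 0 ≤ shannon p := by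
  rw [shannon, neg_nonneg]
  apply Finset.sum_nonpos
  intro i _
  have := Real.negMulLog_nonneg (h0 i) (h1 i)
  simp [Real.negMulLog] at this; linarith

lemma shannon_eq_sum_negMulLog {α : Type*} [Fintype α] (p : α → ℝ) :
    shannon p = ∑ i, Real.negMulLog (p i) := by
  simp [shannon, Real.negMulLog]

lemma shannon_le_log_card {α : Type*} [Fintype α] [Nonempty α] {p : α → ℝ}
    (h0 : ∀ i, 0 ≤ p i) (h1 : (∑ i, p i = 1) ∨ (∀ i, p i = 0)) :
    shannon p ≤ Real.log (Fintype.card α) := by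
  classical
  have hK : (0:ℝ) < Fintype.card α := by
    have := Fintype.card_pos (α := α); positivity
  rcases h1 with h1 | h1
  · have hj := Real.concaveOn_negMulLog.le_map_sum (t := (Finset.univ : Finset α))
      (w := fun _ => (Fintype.card α : ℝ)⁻¹) (p := p)
      (fun i _ => by positivity)
      (by rw [Finset.sum_const, Finset.card_univ, nsmul_eq_mul]; field_simp)
      (fun i _ => h0 i)
    simp only [smul_eq_mul] at hj
    have hsum : ∑ x : α, (Fintype.card α : ℝ)⁻¹ * p x = (Fintype.card α : ℝ)⁻¹ := by
      rw [← Finset.mul_sum, h1, mul_one]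
    rw [hsum] at hj
    have hnml : Real.negMulLog ((Fintype.card α : ℝ)⁻¹)
        = (Fintype.card α : ℝ)⁻¹ * Real.log (Fintype.card α) := by
      simp [Real.negMulLog, Real.log_inv]
    rw [hnml] at hj
    have h2 : (Fintype.card α : ℝ)⁻¹ * ∑ i, Real.negMulLog (p i)
        ≤ (Fintype.card α : ℝ)⁻¹ * Real.log (Fintype.card α) := by
      rw [Finset.mul_sum]; exact hj
    rw [shannon_eq_sum_negMulLog]
    exact le_of_mul_le_mul_left (by simpa using h2) (by positivity)
  · have : shannon p = 0 := by simp [shannon, h1]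
    rw [this]
    exact Real.log_nonneg (by exact_mod_cast Fintype.card_pos)


lemma abs_shannon_sub_le {α : Type*} [Fintype α] {p q : α → ℝ}
    (hp0 : ∀ i, 0 ≤ p i) (hp1 : ∀ i, p i ≤ 1) (hq0 : ∀ i, 0 ≤ q i) (hq1 : ∀ i, q i ≤ 1)
    {δ : ℝ} (hd : ∀ i, |p i - q i| ≤ δ) (hδ : δ ≤ 2) :
    |shannon p - shannon q| ≤ (Fintype.card α) * psiF δ := by
  have key : ∀ i : α, |q i * Real.log (q i) - p i * Real.log (p i)| ≤ psiF δ := by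
    intro i
    calc |q i * Real.log (q i) - p i * Real.log (p i)| ≤ psiF |q i - p i| :=
          mul_log_diff_le (hq0 i) (hq1 i) (hp0 i) (hp1 i)
      _ ≤ psiF δ := psiF_mono (abs_nonneg _) (by rw [abs_sub_comm]; exact hd i) hδ
  have : shannon p - shannon q = ∑ i, (q i * Real.log (q i) - p i * Real.log (p i)) := by
    simp only [shannon, Finset.sum_sub_distrib]; ring
  rw [this]
  calc |∑ i, (q i * Real.log (q i) - p i * Real.log (p i))|
      ≤ ∑ i, |q i * Real.log (q i) - p i * Real.log (p i)| := Finset.abs_sum_le_sum_abs _ _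
    _ ≤ ∑ _i : α, psiF δ := Finset.sum_le_sum (fun i _ => key i)
    _ = (Fintype.card α) * psiF δ := by simp [Finset.card_univ, mul_comm]

section Cond
variable {Z Y : Type*} [Fintype Z] [Fintype Y] [Nonempty Y]

def margZ (p : Z × Y → ℝ) : Z → ℝ := fun z => ∑ y, p (z, y)
def condD (p : Z × Y → ℝ) : Z → Y → ℝ := fun z y => p (z, y) / margZ p z

variable {p q : Z × Y → ℝ}

lemma margZ_nonneg (h0 : ∀ zy, 0 ≤ p zy) (z : Z) : 0 ≤ margZ p z :=
  Finset.sum_nonneg fun y _ => h0 (z, y)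

lemma margZ_sum (h1 : ∑ zy, p zy = 1) : ∑ z, margZ p z = 1 := by
  rw [← h1, Fintype.sum_prod_type]; rfl

lemma p_eq_zero_of_margZ (h0 : ∀ zy, 0 ≤ p zy) {z : Z} (hz : margZ p z = 0) (y : Y) :
    p (z, y) = 0 := by
  have := (Finset.sum_eq_zero_iff_of_nonneg (fun y _ => h0 (z, y))).mp hz
  exact this y (Finset.mem_univ y)

lemma condD_nonneg (h0 : ∀ zy, 0 ≤ p zy) (z : Z) (y : Y) : 0 ≤ condD p z y :=
  div_nonneg (h0 (z, y)) (margZ_nonneg h0 z)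

lemma condD_le_one (h0 : ∀ zy, 0 ≤ p zy) (z : Z) (y : Y) : condD p z y ≤ 1 := by
  rcases eq_or_lt_of_le (margZ_nonneg h0 z) with hz | hz
  · simp [condD, ← hz, p_eq_zero_of_margZ h0 hz.symm]
  · rw [condD, div_le_one hz]
    exact Finset.single_le_sum (fun y _ => h0 (z, y)) (Finset.mem_univ y)

lemma condD_sum (h0 : ∀ zy, 0 ≤ p zy) (z : Z) :
    (∑ y, condD p z y = 1) ∨ (∀ y, condD p z y = 0) := by
  rcases eq_or_lt_of_le (margZ_nonneg h0 z) with hz | hz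
  · right; intro y; simp [condD, ← hz]
  · left
    simp only [condD, ← Finset.sum_div]
    exact div_self (ne_of_gt hz)

lemma margZ_mul_condD (h0 : ∀ zy, 0 ≤ p zy) (z : Z) (y : Y) :
    margZ p z * condD p z y = p (z, y) := by
  rcases eq_or_lt_of_le (margZ_nonneg h0 z) with hz | hz
  · simp [← hz, p_eq_zero_of_margZ h0 hz.symm]
  · rw [condD]; field_simp

lemma condShannon_chain (h0 : ∀ zy, 0 ≤ p zy) :
    shannon p - shannon (margZ p) = ∑ z, margZ p z * shannon (condD p z) := by
  have key : ∀ z y, margZ p z * (condD p z y * Real.log (condD p z y))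
      = p (z, y) * Real.log (p (z, y)) - p (z, y) * Real.log (margZ p z) := by
    intro z y
    rcases eq_or_lt_of_le (margZ_nonneg h0 z) with hz | hz
    · simp [← hz, p_eq_zero_of_margZ h0 hz.symm]
    · rcases eq_or_lt_of_le (h0 (z, y)) with hp | hp
      · simp [condD, ← hp]
      · have : condD p z y = p (z, y) / margZ p z := rfl
        rw [this, Real.log_div (ne_of_gt hp) (ne_of_gt hz)]
        field_simp
  have expand : ∀ z, margZ p z * shannon (condD p z)
      = -∑ y, (p (z, y) * Real.log (p (z, y)) - p (z, y) * Real.log (margZ p z)) := by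
    intro z
    rw [shannon, mul_neg, Finset.mul_sum, neg_inj]
    apply Finset.sum_congr rfl; intro y _
    exact key z y
  calc shannon p - shannon (margZ p)
      = -∑ z, ∑ y, (p (z, y) * Real.log (p (z, y)) - p (z, y) * Real.log (margZ p z)) := by
        have hr : ∀ z, ∑ y, (p (z,y) * Real.log (p (z,y)) - p (z,y) * Real.log (margZ p z))
            = (∑ y, p (z,y) * Real.log (p (z,y))) - margZ p z * Real.log (margZ p z) := by
          intro z; rw [Finset.sum_sub_distrib, ← Finset.sum_mul]; rfl
        rw [shannon, shannon, Fintype.sum_prod_type]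
        simp only [hr, Finset.sum_sub_distrib]
        ring
    _ = ∑ z, margZ p z * shannon (condD p z) := by
        rw [← Finset.sum_neg_distrib]
        exact Finset.sum_congr rfl fun z _ => (expand z).symm


lemma condD_sum_le_one (h0 : ∀ zy, 0 ≤ p zy) (z : Z) : ∑ y, condD p z y ≤ 1 := by
  rcases condD_sum (p := p) h0 z with h | h
  · rw [h]
  · simp [h]

lemma shannon_condD_nonneg (h0 : ∀ zy, 0 ≤ p zy) (z : Z) : 0 ≤ shannon (condD p z) :=
  shannon_nonneg (condD_nonneg h0 z) (condD_le_one h0 z)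

lemma shannon_condD_le (h0 : ∀ zy, 0 ≤ p zy) (z : Z) :
    shannon (condD p z) ≤ Real.log (Fintype.card Y) :=
  shannon_le_log_card (condD_nonneg h0 z)
    (by rcases condD_sum (p := p) h0 z with h | h
        · exact Or.inl h
        · exact Or.inr h)

lemma condShannon_nonneg_aux (h0 : ∀ zy, 0 ≤ p zy) :
    0 ≤ shannon p - shannon (margZ p) := by
  rw [condShannon_chain h0]
  exact Finset.sum_nonneg fun z _ =>
    mul_nonneg (margZ_nonneg h0 z) (shannon_condD_nonneg h0 z)

lemma abs_condShannon_sub_le (h0p : ∀ zy, 0 ≤ p zy) (h1p : ∑ zy, p zy = 1)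
    (h0q : ∀ zy, 0 ≤ q zy) (h1q : ∑ zy, q zy = 1)
    {ν : ℝ} (hν0 : 0 ≤ ν) (hν1 : ν ≤ 1) (htv : ∑ zy, |p zy - q zy| ≤ ν) :
    |(shannon p - shannon (margZ p)) - (shannon q - shannon (margZ q))|
      ≤ Real.log (Fintype.card Y) * ν + (Fintype.card Y) * psiF (2*ν) := by
  classical
  have hY0 : (0:ℝ) ≤ Real.log (Fintype.card Y) :=
    Real.log_nonneg (by exact_mod_cast Fintype.card_pos)
  have htv' : ∑ z, ∑ y, |p (z,y) - q (z,y)| ≤ ν := by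
    calc ∑ z, ∑ y, |p (z,y) - q (z,y)| = ∑ zy : Z × Y, |p zy - q zy| :=
          (Fintype.sum_prod_type (f := fun zy : Z × Y => |p zy - q zy|)).symm
      _ ≤ ν := htv
  have hmarg : ∀ z, |margZ p z - margZ q z| ≤ ∑ y, |p (z,y) - q (z,y)| := by
    intro z
    rw [margZ, margZ, ← Finset.sum_sub_distrib]
    exact Finset.abs_sum_le_sum_abs _ _
  set δ : Z → ℝ := fun z => ∑ y, |condD p z y - condD q z y| with hδdef
  have hδ0 : ∀ z, 0 ≤ δ z := fun z => Finset.sum_nonneg fun y _ => abs_nonneg _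
  have hδ2 : ∀ z, δ z ≤ 2 := by
    intro z
    calc δ z ≤ ∑ y, (condD p z y + condD q z y) := by
          apply Finset.sum_le_sum; intro y _
          exact (abs_sub (condD p z y) (condD q z y)).trans
            (by rw [abs_of_nonneg (condD_nonneg h0p z y), abs_of_nonneg (condD_nonneg h0q z y)])
      _ = (∑ y, condD p z y) + ∑ y, condD q z y := Finset.sum_add_distrib
      _ ≤ 2 := by
          have := condD_sum_le_one h0p z; have := condD_sum_le_one h0q z; linarith
  have hkey : ∀ z, margZ p z * δ z ≤ 2 * ∑ y, |p (z,y) - q (z,y)| := by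
    intro z
    have expand : margZ p z * δ z = ∑ y, |p (z,y) - margZ p z * condD q z y| := by
      rw [hδdef, Finset.mul_sum]
      apply Finset.sum_congr rfl; intro y _
      rw [← abs_of_nonneg (margZ_nonneg h0p z), ← abs_mul, mul_sub,
        margZ_mul_condD h0p, abs_of_nonneg (margZ_nonneg h0p z)]
    rw [expand]
    calc ∑ y, |p (z,y) - margZ p z * condD q z y|
        ≤ ∑ y, (|p (z,y) - q (z,y)| + |margZ q z - margZ p z| * condD q z y) := by
          apply Finset.sum_le_sum; intro y _
          have h1 : q (z,y) - margZ p z * condD q z y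
              = (margZ q z - margZ p z) * condD q z y := by
            rw [sub_mul, margZ_mul_condD h0q]
          calc |p (z,y) - margZ p z * condD q z y|
              ≤ |p (z,y) - q (z,y)| + |q (z,y) - margZ p z * condD q z y| :=
                abs_sub_le _ _ _
            _ = |p (z,y) - q (z,y)| + |margZ q z - margZ p z| * condD q z y := by
                rw [h1, abs_mul, abs_of_nonneg (condD_nonneg h0q z y)]
      _ = (∑ y, |p (z,y) - q (z,y)|) + |margZ q z - margZ p z| * ∑ y, condD q z y := by
          rw [Finset.sum_add_distrib, Finset.mul_sum]
      _ ≤ (∑ y, |p (z,y) - q (z,y)|) + (∑ y, |p (z,y) - q (z,y)|) * 1 := by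
          have h2 : |margZ q z - margZ p z| ≤ ∑ y, |p (z,y) - q (z,y)| := by
            rw [abs_sub_comm]; exact hmarg z
          have h3 := condD_sum_le_one h0q z
          have h4 : (0:ℝ) ≤ ∑ y, condD q z y :=
            Finset.sum_nonneg fun y _ => condD_nonneg h0q z y
          have := mul_le_mul h2 h3 h4 (Finset.sum_nonneg fun y _ => abs_nonneg _)
          linarith
      _ = 2 * ∑ y, |p (z,y) - q (z,y)| := by ring
  have hsumδ : ∑ z, margZ p z * δ z ≤ 2 * ν := by
    calc ∑ z, margZ p z * δ z ≤ ∑ z, 2 * ∑ y, |p (z,y) - q (z,y)| :=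
          Finset.sum_le_sum fun z _ => hkey z
      _ = 2 * ∑ z, ∑ y, |p (z,y) - q (z,y)| := by rw [Finset.mul_sum]
      _ ≤ 2 * ν := by linarith
  -- decompose
  rw [condShannon_chain h0p, condShannon_chain h0q, ← Finset.sum_sub_distrib]
  have split : ∀ z, margZ p z * shannon (condD p z) - margZ q z * shannon (condD q z)
      = (margZ p z - margZ q z) * shannon (condD q z)
        + margZ p z * (shannon (condD p z) - shannon (condD q z)) := by
    intro z; ring
  simp only [split]
  rw [Finset.sum_add_distrib]
  have hT1 : |∑ z, (margZ p z - margZ q z) * shannon (condD q z)|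
      ≤ Real.log (Fintype.card Y) * ν := by
    calc |∑ z, (margZ p z - margZ q z) * shannon (condD q z)|
        ≤ ∑ z, |(margZ p z - margZ q z) * shannon (condD q z)| :=
          Finset.abs_sum_le_sum_abs _ _
      _ ≤ ∑ z, (∑ y, |p (z,y) - q (z,y)|) * Real.log (Fintype.card Y) := by
          apply Finset.sum_le_sum; intro z _
          rw [abs_mul, abs_of_nonneg (shannon_condD_nonneg h0q z)]
          exact mul_le_mul (hmarg z) (shannon_condD_le h0q z)
            (shannon_condD_nonneg h0q z) (Finset.sum_nonneg fun y _ => abs_nonneg _)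
      _ = (∑ z, ∑ y, |p (z,y) - q (z,y)|) * Real.log (Fintype.card Y) := by
          rw [Finset.sum_mul]
      _ ≤ Real.log (Fintype.card Y) * ν := by
          rw [mul_comm]
          exact mul_le_mul_of_nonneg_left htv' hY0
  have hT2 : |∑ z, margZ p z * (shannon (condD p z) - shannon (condD q z))|
      ≤ (Fintype.card Y) * psiF (2*ν) := by
    have hperz : ∀ z, |shannon (condD p z) - shannon (condD q z)|
        ≤ (Fintype.card Y) * psiF (δ z) := by
      intro z
      apply abs_shannon_sub_le (condD_nonneg h0p z) (condD_le_one h0p z)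
        (condD_nonneg h0q z) (condD_le_one h0q z) (δ := δ z) ?_ (hδ2 z)
      intro y
      exact Finset.single_le_sum (f := fun y => |condD p z y - condD q z y|)
        (fun y _ => abs_nonneg _) (Finset.mem_univ y)
    calc |∑ z, margZ p z * (shannon (condD p z) - shannon (condD q z))|
        ≤ ∑ z, |margZ p z * (shannon (condD p z) - shannon (condD q z))| :=
          Finset.abs_sum_le_sum_abs _ _
      _ ≤ ∑ z, margZ p z * ((Fintype.card Y) * psiF (δ z)) := by
          apply Finset.sum_le_sum; intro z _
          rw [abs_mul, abs_of_nonneg (margZ_nonneg h0p z)]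
          exact mul_le_mul_of_nonneg_left (hperz z) (margZ_nonneg h0p z)
      _ = (Fintype.card Y) * ∑ z, margZ p z * psiF (δ z) := by
          rw [Finset.mul_sum]; apply Finset.sum_congr rfl; intro z _; ring
      _ ≤ (Fintype.card Y) * psiF (2*ν) := by
          apply mul_le_mul_of_nonneg_left ?_ (by positivity)
          calc ∑ z, margZ p z * psiF (δ z) ≤ psiF (∑ z, margZ p z * δ z) :=
                psiF_jensen _ _ (margZ_nonneg h0p) (margZ_sum h1p) hδ0
            _ ≤ psiF (2*ν) := by
                apply psiF_mono ?_ hsumδ (by linarith)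
                exact Finset.sum_nonneg fun z _ =>
                  mul_nonneg (margZ_nonneg h0p z) (hδ0 z)
  calc |(∑ z, (margZ p z - margZ q z) * shannon (condD q z))
        + ∑ z, margZ p z * (shannon (condD p z) - shannon (condD q z))|
      ≤ |∑ z, (margZ p z - margZ q z) * shannon (condD q z)|
        + |∑ z, margZ p z * (shannon (condD p z) - shannon (condD q z))| := abs_add_le _ _
    _ ≤ Real.log (Fintype.card Y) * ν + (Fintype.card Y) * psiF (2*ν) := by
        exact add_le_add hT1 hT2

end Cond

section Mat
variable {β : Type*} [Fintype β] [DecidableEq β]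

/-- `M` is a (finite) Gram-form matrix: `M = ∑ₖ fₖ fₖᴴ`. -/
def Gram (M : Matrix β β ℂ) : Prop :=
  ∃ (κ : Type) (_ : Fintype κ) (F : κ → β → ℂ),
    ∀ s t, M s t = ∑ k, F k s * (starRingEnd ℂ) (F k t)

/-- Born probability of outcome `M` on state `ρ`. -/
def mprob (M ρ : Matrix β β ℂ) : ℝ := (∑ s, ∑ t, M s t * ρ t s).re

lemma sum_fun_prod {ι κ : Type*} [Fintype ι] [DecidableEq ι] [Fintype κ]
    {R : Type*} [CommSemiring R] (g : ι → κ → R) :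
    ∑ r : ι → κ, ∏ i, g i (r i) = ∏ i, ∑ a, g i a := by
  rw [← Finset.sum_prod_piFinset Finset.univ g, Fintype.piFinset_univ]

lemma gram_zero : Gram (0 : Matrix β β ℂ) :=
  ⟨Fin 0, inferInstance, fun k _ => (Fin.elim0 k), fun s t => by simp⟩

lemma mprob_sub (M ρ ρ' : Matrix β β ℂ) :
    mprob M ρ - mprob M ρ' = mprob M (ρ - ρ') := by
  simp [mprob, Matrix.sub_apply, mul_sub, Finset.sum_sub_distrib, Complex.sub_re]

lemma trace_eq_sum_sum (M ρ : Matrix β β ℂ) :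
    (M * ρ).trace = ∑ s, ∑ t, M s t * ρ t s := by
  simp [Matrix.trace, Matrix.mul_apply, Matrix.diag]

lemma trace_mul_diagonal' (A : Matrix β β ℂ) (d : β → ℂ) :
    (A * Matrix.diagonal d).trace = ∑ j, A j j * d j := by
  simp [Matrix.trace, Matrix.mul_apply, Matrix.diagonal, Matrix.diag, Finset.sum_ite_eq]

lemma star_mul_mul_diag (M U : Matrix β β ℂ) (j : β) :
    ((star U) * M * U) j j = ∑ s, ∑ t, (starRingEnd ℂ) (U s j) * M s t * U t j := by
  calc ((star U) * M * U) j j = ∑ t, ((star U) * M) j t * U t j := Matrix.mul_apply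
    _ = ∑ t, ∑ s, (starRingEnd ℂ) (U s j) * M s t * U t j := by
        apply Finset.sum_congr rfl; intro t _
        rw [Matrix.mul_apply, Finset.sum_mul]
        apply Finset.sum_congr rfl; intro s _
        simp [Matrix.star_eq_conjTranspose, Matrix.conjTranspose_apply]
    _ = ∑ s, ∑ t, (starRingEnd ℂ) (U s j) * M s t * U t j := Finset.sum_comm

lemma gram_entry_diag {M : Matrix β β ℂ} (hM : Gram M) (U : Matrix β β ℂ) (j : β) :
    ∃ r : ℝ, 0 ≤ r ∧ ((star U) * M * U) j j = (r : ℂ) := by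
  obtain ⟨κ, _, F, hF⟩ := hM
  refine ⟨∑ k, Complex.normSq (∑ t, (starRingEnd ℂ) (U t j) * F k t), ?_, ?_⟩
  · exact Finset.sum_nonneg fun k _ => Complex.normSq_nonneg _
  rw [star_mul_mul_diag]
  have key : ∀ k : κ, (∑ s, (starRingEnd ℂ) (U s j) * F k s)
      * (starRingEnd ℂ) (∑ t, (starRingEnd ℂ) (U t j) * F k t)
      = ∑ s, ∑ t, (starRingEnd ℂ) (U s j) * (F k s * (starRingEnd ℂ) (F k t)) * U t j := by
    intro k
    rw [map_sum, Finset.sum_mul_sum]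
    apply Finset.sum_congr rfl; intro s _
    apply Finset.sum_congr rfl; intro t _
    simp only [map_mul, Complex.conj_conj]
    ring
  calc ∑ s, ∑ t, (starRingEnd ℂ) (U s j) * M s t * U t j
      = ∑ s, ∑ k, ∑ t, (starRingEnd ℂ) (U s j) * (F k s * (starRingEnd ℂ) (F k t)) * U t j := by
        apply Finset.sum_congr rfl; intro s _
        rw [← Finset.sum_comm]
        apply Finset.sum_congr rfl; intro t _
        rw [hF s t, Finset.mul_sum, Finset.sum_mul]
    _ = ∑ k, ∑ s, ∑ t, (starRingEnd ℂ) (U s j) * (F k s * (starRingEnd ℂ) (F k t)) * U t j :=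
        Finset.sum_comm
    _ = ∑ k, (∑ s, (starRingEnd ℂ) (U s j) * F k s)
        * (starRingEnd ℂ) (∑ t, (starRingEnd ℂ) (U t j) * F k t) := by
        exact Finset.sum_congr rfl fun k _ => (key k).symm
    _ = ∑ k, (Complex.normSq (∑ t, (starRingEnd ℂ) (U t j) * F k t) : ℂ) := by
        apply Finset.sum_congr rfl; intro k _
        exact Complex.mul_conj _
    _ = ((∑ k, Complex.normSq (∑ t, (starRingEnd ℂ) (U t j) * F k t) : ℝ) : ℂ) := by
        push_cast; rfl


lemma mprob_eq_spectral {Δ : Matrix β β ℂ} (hΔ : Δ.IsHermitian) (M : Matrix β β ℂ) :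
    mprob M Δ = ∑ j, hΔ.eigenvalues j *
      ((star (hΔ.eigenvectorUnitary : Matrix β β ℂ) * M
        * (hΔ.eigenvectorUnitary : Matrix β β ℂ)) j j).re := by
  set U := (hΔ.eigenvectorUnitary : Matrix β β ℂ) with hU
  have h1 : mprob M Δ = ((M * Δ).trace).re := by rw [mprob, trace_eq_sum_sum]
  have h2 : (M * Δ).trace
      = ∑ j, ((star U) * M * U) j j * ((RCLike.ofReal ∘ hΔ.eigenvalues) j) := by
    conv_lhs => rw [hΔ.spectral_theorem, Unitary.conjStarAlgAut_apply, ← hU]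
    rw [show M * (U * Matrix.diagonal (RCLike.ofReal ∘ hΔ.eigenvalues) * star U)
        = (M * U * Matrix.diagonal (RCLike.ofReal ∘ hΔ.eigenvalues)) * star U by
      rw [← Matrix.mul_assoc, ← Matrix.mul_assoc]]
    rw [Matrix.trace_mul_comm]
    rw [show star U * (M * U * Matrix.diagonal (RCLike.ofReal ∘ hΔ.eigenvalues))
        = ((star U) * M * U) * Matrix.diagonal (RCLike.ofReal ∘ hΔ.eigenvalues) by
      rw [← Matrix.mul_assoc, ← Matrix.mul_assoc]]
    rw [trace_mul_diagonal']
  rw [h1, h2, Complex.re_sum]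
  apply Finset.sum_congr rfl; intro j _
  rw [show ((RCLike.ofReal ∘ hΔ.eigenvalues) j : ℂ) = Complex.ofReal (hΔ.eigenvalues j) from rfl]
  simp [Complex.mul_re]
  ring

lemma abs_mprob_sum_le {ι : Type*} [Fintype ι] {M : ι → Matrix β β ℂ}
    (hg : ∀ i, Gram (M i)) (hsum : ∑ i, M i = 1)
    {Δ : Matrix β β ℂ} (hΔ : Δ.IsHermitian) :
    ∑ i, |mprob (M i) Δ| ≤ trNorm Δ := by
  set U := (hΔ.eigenvectorUnitary : Matrix β β ℂ) with hU
  set c : ι → β → ℝ := fun i j => ((star U * M i * U) j j).re with hc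
  have hc0 : ∀ i j, 0 ≤ c i j := by
    intro i j
    obtain ⟨r, hr0, hr⟩ := gram_entry_diag (hg i) U j
    show 0 ≤ ((star U * M i * U) j j).re
    rw [hr, Complex.ofReal_re]; exact hr0
  have hcsum : ∀ j, ∑ i, c i j = 1 := by
    intro j
    have h1 : ∑ i, (star U * M i * U) j j = ((star U * (∑ i, M i) * U)) j j := by
      rw [Matrix.mul_sum, Matrix.sum_mul, Matrix.sum_apply]
    have h2 : star U * (∑ i, M i) * U = 1 := by
      rw [hsum, Matrix.mul_one]
      exact Matrix.UnitaryGroup.star_mul_self _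
    simp only [hc, ← Complex.re_sum, h1, h2, Matrix.one_apply_eq, Complex.one_re]
  have hval : ∀ i, mprob (M i) Δ = ∑ j, hΔ.eigenvalues j * c i j := fun i =>
    mprob_eq_spectral hΔ (M i)
  calc ∑ i, |mprob (M i) Δ| = ∑ i, |∑ j, hΔ.eigenvalues j * c i j| := by
        exact Finset.sum_congr rfl fun i _ => by rw [hval i]
    _ ≤ ∑ i, ∑ j, |hΔ.eigenvalues j| * c i j := by
        apply Finset.sum_le_sum; intro i _
        refine (Finset.abs_sum_le_sum_abs _ _).trans ?_
        apply Finset.sum_le_sum; intro j _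
        rw [abs_mul, abs_of_nonneg (hc0 i j)]
    _ = ∑ j, |hΔ.eigenvalues j| * ∑ i, c i j := by
        rw [Finset.sum_comm]
        exact Finset.sum_congr rfl fun j _ => by rw [Finset.mul_sum]
    _ = ∑ j, |hΔ.eigenvalues j| := by simp [hcsum]
    _ = trNorm Δ := by rw [trNorm, dif_pos hΔ]

lemma mprob_nonneg {ι : Type*} [Fintype ι] {M : ι → Matrix β β ℂ}
    (hg : ∀ i, Gram (M i)) {ρ : Matrix β β ℂ} (hρ : ρ.PosSemidef) (i : ι) :
    0 ≤ mprob (M i) ρ := by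
  rw [mprob_eq_spectral hρ.1 (M i)]
  apply Finset.sum_nonneg; intro j _
  apply mul_nonneg (hρ.eigenvalues_nonneg j)
  obtain ⟨r, hr0, hr⟩ := gram_entry_diag (hg i)
    ((Matrix.IsHermitian.eigenvectorUnitary hρ.1 : Matrix β β ℂ)) j
  rw [hr, Complex.ofReal_re]; exact hr0

lemma mprob_sum_one {ι : Type*} [Fintype ι] {M : ι → Matrix β β ℂ}
    (hsum : ∑ i, M i = 1) {ρ : Matrix β β ℂ} (hρtr : ρ.trace = 1) :
    ∑ i, mprob (M i) ρ = 1 := by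
  have h1 : ∑ i, mprob (M i) ρ = (∑ s, ∑ t, ((∑ i, M i) s t) * ρ t s).re := by
    simp only [mprob]
    rw [← Complex.re_sum]
    congr 1
    rw [Finset.sum_comm]
    apply Finset.sum_congr rfl; intro s _
    rw [Finset.sum_comm]
    apply Finset.sum_congr rfl; intro t _
    rw [Matrix.sum_apply, Finset.sum_mul]
  rw [h1, hsum]
  have : ∑ s, ∑ t, (1 : Matrix β β ℂ) s t * ρ t s = ρ.trace := by
    rw [← trace_eq_sum_sum, Matrix.one_mul]
  rw [this, hρtr, Complex.one_re]


/-- The rank-one projective measurement family given by (the columns of) a unitary `U`. -/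
def basisFam (U : Matrix β β ℂ) (j : β) : Matrix β β ℂ :=
  Matrix.of fun s t => U s j * (starRingEnd ℂ) (U t j)

lemma basisFam_gram (U : Matrix β β ℂ) (j : β) : Gram (basisFam U j) :=
  ⟨Fin 1, inferInstance, fun _ s => U s j, fun s t => by
    simp [basisFam]⟩

lemma basisFam_sum {U : Matrix β β ℂ} (hU : U ∈ Matrix.unitaryGroup β ℂ) :
    ∑ j, basisFam U j = 1 := by
  have hmul : U * star U = 1 :=
    mul_eq_one_comm.mp (Matrix.UnitaryGroup.star_mul_self ⟨U, hU⟩)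
  ext s t
  rw [Matrix.sum_apply]
  have : ∑ j, basisFam U j s t = (U * star U) s t := by
    rw [Matrix.mul_apply]
    apply Finset.sum_congr rfl; intro j _
    simp [basisFam, Matrix.star_eq_conjTranspose, Matrix.conjTranspose_apply]
  rw [this, hmul]

lemma basisFam_mprob (U : Matrix β β ℂ) (σ : Matrix β β ℂ) (j : β) :
    mprob (basisFam U j) σ = ((star U * σ * U) j j).re := by
  rw [mprob, star_mul_mul_diag]
  congr 1
  rw [Finset.sum_comm]
  apply Finset.sum_congr rfl; intro t _
  apply Finset.sum_congr rfl; intro s _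
  simp [basisFam]; ring

lemma basisFam_mprob_eigen {σ : Matrix β β ℂ} (hσ : σ.IsHermitian) (j : β) :
    mprob (basisFam (hσ.eigenvectorUnitary : Matrix β β ℂ) j) σ = hσ.eigenvalues j := by
  rw [basisFam_mprob, ← Unitary.conjStarAlgAut_star_apply (S := ℂ), hσ.conjStarAlgAut_star_eigenvectorUnitary]
  simp [Matrix.diagonal_apply_eq]

lemma vN_eq_shannon_eigen {σ : Matrix β β ℂ} (hσ : σ.IsHermitian) :
    vN σ = shannon (fun j => mprob (basisFam (hσ.eigenvectorUnitary : Matrix β β ℂ) j) σ) := by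
  rw [vN, dif_pos hσ, shannon]
  congr 1
  apply Finset.sum_congr rfl; intro j _
  rw [basisFam_mprob_eigen hσ]

lemma vN_le_shannon_meas {σ : Matrix β β ℂ} (hσ : IsDensity σ)
    {U : Matrix β β ℂ} (hU : U ∈ Matrix.unitaryGroup β ℂ) :
    vN σ ≤ shannon (fun j => mprob (basisFam U j) σ) := by
  classical
  have hherm : σ.IsHermitian := hσ.1.1
  set W := (hherm.eigenvectorUnitary : Matrix β β ℂ) with hW
  have hWu : W ∈ Matrix.unitaryGroup β ℂ := hherm.eigenvectorUnitary.2
  set V := star W * U with hV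
  have hVu : V ∈ Matrix.unitaryGroup β ℂ := by
    rw [hV]
    exact (Matrix.unitaryGroup β ℂ).mul_mem (Unitary.star_mem hWu) hU
  have hVsV : star V * V = 1 := Matrix.UnitaryGroup.star_mul_self ⟨V, hVu⟩
  have hVVs : V * star V = 1 := mul_eq_one_comm.mp hVsV
  set D2 : β → β → ℝ := fun j k => Complex.normSq (V k j) with hD2
  set μ := hherm.eigenvalues with hμ
  -- q j = ∑ k, D2 j k * μ k
  have hq : ∀ j, mprob (basisFam U j) σ = ∑ k, D2 j k * μ k := by
    intro j
    rw [basisFam_mprob]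
    have hσspec : σ = W * Matrix.diagonal (RCLike.ofReal ∘ μ) * star W :=
      hherm.spectral_theorem
    have : star U * σ * U = star V * Matrix.diagonal (RCLike.ofReal ∘ μ) * V := by
      rw [hσspec, hV]
      simp only [Matrix.star_mul, star_star, Matrix.mul_assoc]
    rw [this, star_mul_mul_diag]
    have hent : ∀ s t, (starRingEnd ℂ) (V s j) * Matrix.diagonal (RCLike.ofReal ∘ μ) s t * V t j
        = if t = s then ((μ s * D2 j s : ℝ) : ℂ) else 0 := by
      intro s t
      by_cases h : t = s
      · subst h
        simp only [Matrix.diagonal_apply_eq, Function.comp_apply, if_pos rfl]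
        rw [show ((RCLike.ofReal (μ t)) : ℂ) = Complex.ofReal (μ t) from rfl]
        rw [show (starRingEnd ℂ) (V t j) * (Complex.ofReal (μ t)) * V t j
            = Complex.ofReal (μ t) * (V t j * (starRingEnd ℂ) (V t j)) from by ring,
          Complex.mul_conj]
        push_cast; ring
      · rw [Matrix.diagonal_apply_ne' _ h, if_neg h]
        ring
    calc (∑ s, ∑ t, (starRingEnd ℂ) (V s j) * Matrix.diagonal (RCLike.ofReal ∘ μ) s t * V t j).re
        = (∑ s, ((μ s * D2 j s : ℝ) : ℂ)).re := by
          congr 1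
          apply Finset.sum_congr rfl; intro ss _
          rw [Finset.sum_congr rfl (fun t _ => hent ss t), Finset.sum_ite_eq' Finset.univ ss]
          simp
      _ = ∑ k, D2 j k * μ k := by
          rw [Complex.re_sum]
          apply Finset.sum_congr rfl; intro k _
          rw [Complex.ofReal_re]; ring
  have hrow : ∀ j, ∑ k, D2 j k = 1 := by
    intro j
    have h1 : (star V * V) j j = ∑ k, ((D2 j k : ℝ) : ℂ) := by
      rw [Matrix.mul_apply]
      apply Finset.sum_congr rfl; intro k _
      simp [Matrix.star_eq_conjTranspose, Matrix.conjTranspose_apply, hD2]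
      rw [mul_comm, Complex.mul_conj]
    rw [hVsV] at h1
    have := congrArg Complex.re h1
    rw [Matrix.one_apply_eq, Complex.one_re, Complex.re_sum] at this
    simp only [Complex.ofReal_re] at this
    exact this.symm
  have hcol : ∀ k, ∑ j, D2 j k = 1 := by
    intro k
    have h1 : (V * star V) k k = ∑ j, ((D2 j k : ℝ) : ℂ) := by
      rw [Matrix.mul_apply]
      apply Finset.sum_congr rfl; intro j _
      simp [Matrix.star_eq_conjTranspose, Matrix.conjTranspose_apply, hD2]
      rw [Complex.mul_conj]
    rw [hVVs] at h1
    have := congrArg Complex.re h1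
    rw [Matrix.one_apply_eq, Complex.one_re, Complex.re_sum] at this
    simp only [Complex.ofReal_re] at this
    exact this.symm
  have hD20 : ∀ j k, 0 ≤ D2 j k := fun j k => Complex.normSq_nonneg _
  have hμ0 : ∀ k, 0 ≤ μ k := hσ.1.eigenvalues_nonneg
  -- Jensen per j
  have hjensen : ∀ j, ∑ k, D2 j k * Real.negMulLog (μ k)
      ≤ Real.negMulLog (∑ k, D2 j k * μ k) := by
    intro j
    have := Real.concaveOn_negMulLog.le_map_sum (t := (Finset.univ : Finset β))
      (w := D2 j) (p := μ) (fun k _ => hD20 j k) (hrow j) (fun k _ => hμ0 k)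
    simpa [smul_eq_mul] using this
  calc vN σ = ∑ k, Real.negMulLog (μ k) := by
        rw [vN, dif_pos hherm, ← Finset.sum_neg_distrib]
        apply Finset.sum_congr rfl; intro k _
        simp [Real.negMulLog, hμ]
    _ = ∑ k, (∑ j, D2 j k) * Real.negMulLog (μ k) := by
        apply Finset.sum_congr rfl; intro k _; rw [hcol k, one_mul]
    _ = ∑ j, ∑ k, D2 j k * Real.negMulLog (μ k) := by
        rw [Finset.sum_comm]
        apply Finset.sum_congr rfl; intro k _
        rw [Finset.sum_mul]
    _ ≤ ∑ j, Real.negMulLog (∑ k, D2 j k * μ k) := Finset.sum_le_sum fun j _ => hjensen j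
    _ = shannon (fun j => mprob (basisFam U j) σ) := by
        rw [shannon_eq_sum_negMulLog]
        apply Finset.sum_congr rfl; intro j _
        rw [hq j]

lemma abs_vN_sub_le {ρ ρ' : Matrix β β ℂ} (hρ : IsDensity ρ) (hρ' : IsDensity ρ')
    {ν : ℝ} (hν0 : 0 ≤ ν) (hν2 : ν ≤ 2) (htr : trNorm (ρ - ρ') ≤ ν) :
    |vN ρ - vN ρ'| ≤ (Fintype.card β) * psiF ν := by
  classical
  have hΔ : (ρ - ρ').IsHermitian := hρ.1.1.sub hρ'.1.1
  have main : ∀ (σ τ : Matrix β β ℂ), IsDensity σ → IsDensity τ →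
      (trNorm (σ - τ) ≤ ν ∨ trNorm (τ - σ) ≤ ν) → vN τ ≤ vN σ + (Fintype.card β) * psiF ν := by
    intro σ τ hσ hτ htr'
    have hherm := hσ.1.1
    set U := (hherm.eigenvectorUnitary : Matrix β β ℂ) with hU
    have hUu : U ∈ Matrix.unitaryGroup β ℂ := hherm.eigenvectorUnitary.2
    set M : β → Matrix β β ℂ := basisFam U with hM
    have hg : ∀ j, Gram (M j) := basisFam_gram U
    have hsum : ∑ j, M j = 1 := basisFam_sum hUu
    set p : β → ℝ := fun j => mprob (M j) σ with hp
    set q : β → ℝ := fun j => mprob (M j) τ with hq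
    have hp0 : ∀ j, 0 ≤ p j := mprob_nonneg hg hσ.1
    have hp1 : ∑ j, p j = 1 := mprob_sum_one hsum hσ.2
    have hq0 : ∀ j, 0 ≤ q j := mprob_nonneg hg hτ.1
    have hq1 : ∑ j, q j = 1 := mprob_sum_one hsum hτ.2
    have htv : ∑ j, |p j - q j| ≤ ν := by
      rcases htr' with htr' | htr'
      · calc ∑ j, |p j - q j| = ∑ j, |mprob (M j) (σ - τ)| := by
              apply Finset.sum_congr rfl; intro j _; rw [mprob_sub]
          _ ≤ trNorm (σ - τ) := abs_mprob_sum_le hg hsum (hσ.1.1.sub hτ.1.1)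
          _ ≤ ν := htr'
      · calc ∑ j, |p j - q j| = ∑ j, |mprob (M j) (τ - σ)| := by
              apply Finset.sum_congr rfl; intro j _; rw [abs_sub_comm, mprob_sub]
          _ ≤ trNorm (τ - σ) := abs_mprob_sum_le hg hsum (hτ.1.1.sub hσ.1.1)
          _ ≤ ν := htr'
    have hfannes : |shannon p - shannon q| ≤ (Fintype.card β) * psiF ν := by
      apply abs_shannon_sub_le hp0 (entry_le_one hp0 hp1) hq0 (entry_le_one hq0 hq1) ?_ hν2
      intro j
      exact le_trans (Finset.single_le_sum (f := fun j => |p j - q j|)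
        (fun j _ => abs_nonneg _) (Finset.mem_univ j)) htv
    have h1 : vN σ = shannon p := vN_eq_shannon_eigen hherm
    have h2 : vN τ ≤ shannon q := vN_le_shannon_meas hτ hUu
    calc vN τ ≤ shannon q := h2
      _ ≤ shannon p + (Fintype.card β) * psiF ν := by
          have := abs_le.mp hfannes; linarith
      _ = vN σ + (Fintype.card β) * psiF ν := by rw [h1]
  have ha := main ρ ρ' hρ hρ' (Or.inl htr)
  have hb := main ρ' ρ hρ' hρ (Or.inr htr)
  rw [abs_le]; constructor <;> linarith

end Mat

end WD

namespace WD

lemma ONB_complete {d : ℕ} {B : Fin d → Fin d → ℂ} (hB : ONB B) (i j : Fin d) :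
    ∑ a, B a i * (starRingEnd ℂ) (B a j) = if i = j then 1 else 0 := by
  classical
  set D : Matrix (Fin d) (Fin d) ℂ := Matrix.of fun a i => (starRingEnd ℂ) (B a i) with hD
  have h1 : D * star D = 1 := by
    ext a b
    rw [Matrix.mul_apply]
    calc ∑ i, D a i * (star D) i b = ∑ i, (starRingEnd ℂ) (B a i) * B b i := by
          apply Finset.sum_congr rfl; intro i _
          simp [hD, Matrix.star_eq_conjTranspose, Matrix.conjTranspose_apply]
      _ = if a = b then 1 else 0 := hB a b
      _ = (1 : Matrix (Fin d) (Fin d) ℂ) a b := (Matrix.one_apply).symm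
  have h2 : star D * D = 1 := mul_eq_one_comm.mp h1
  have h3 := congrFun (congrFun h2 i) j
  rw [Matrix.mul_apply] at h3
  calc ∑ a, B a i * (starRingEnd ℂ) (B a j)
      = ∑ a, (star D) i a * D a j := by
        apply Finset.sum_congr rfl; intro a _
        simp [hD, Matrix.star_eq_conjTranspose, Matrix.conjTranspose_apply]
    _ = (1 : Matrix (Fin d) (Fin d) ℂ) i j := h3
    _ = if i = j then 1 else 0 := Matrix.one_apply

lemma stdONB (d : ℕ) : ONB (fun (a i : Fin d) => if a = i then (1:ℂ) else 0) := by
  intro a b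
  by_cases hab : a = b
  · subst hab
    rw [if_pos rfl]
    have key : ∀ i : Fin d, (starRingEnd ℂ) (if a = i then (1:ℂ) else 0) * (if a = i then 1 else 0)
        = if a = i then 1 else 0 := fun i => by by_cases h : a = i <;> simp [h]
    rw [show (∑ i, (starRingEnd ℂ) ((fun (a i : Fin d) => if a = i then (1:ℂ) else 0) a i)
        * (fun (a i : Fin d) => if a = i then (1:ℂ) else 0) a i) = ∑ i, if a = i then (1:ℂ) else 0
      from Finset.sum_congr rfl fun i _ => key i]
    rw [Finset.sum_ite_eq Finset.univ a]
    simp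
  · rw [if_neg hab]
    apply Finset.sum_eq_zero; intro i _
    by_cases ha : a = i
    · have hb : ¬ b = i := fun h => hab (ha.trans h.symm)
      simp [ha, hb]
    · simp [ha]

lemma prod_delta {N d : ℕ} (s t : Fin N → Fin d) :
    (∏ n, if s n = t n then (1:ℂ) else 0) = if s = t then 1 else 0 := by
  by_cases h : s = t
  · subst h; simp
  · rw [if_neg h]
    obtain ⟨n, hn⟩ := Function.ne_iff.mp h
    exact Finset.prod_eq_zero (Finset.mem_univ n) (if_neg hn)

lemma pinned_sum {N d : ℕ} [NeZero d] (A : Finset (Fin N)) (f : Fin N → Fin d → ℂ)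
    (c : Fin N → ℂ) :
    (∑ y : Fin N → Fin d, if ∀ n, n ∉ A → y n = 0 then
      ∏ n, (if n ∈ A then f n (y n) else c n) else 0)
    = ∏ n, (if n ∈ A then ∑ a, f n a else c n) := by
  classical
  set g : Fin N → Fin d → ℂ := fun n a => if n ∈ A then f n a else (if a = 0 then c n else 0)
    with hg
  have step1 : ∀ y : Fin N → Fin d, (if ∀ n, n ∉ A → y n = 0 then
      ∏ n, (if n ∈ A then f n (y n) else c n) else 0) = ∏ n, g n (y n) := by
    intro y
    by_cases hpin : ∀ n, n ∉ A → y n = 0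
    · rw [if_pos hpin]
      apply Finset.prod_congr rfl; intro n _
      by_cases hn : n ∈ A
      · simp [hg, hn]
      · simp [hg, hn, hpin n hn]
    · rw [if_neg hpin]
      push_neg at hpin
      obtain ⟨n, hn, hyn⟩ := hpin
      symm
      apply Finset.prod_eq_zero (Finset.mem_univ n)
      simp [hg, hn, hyn]
  rw [Finset.sum_congr rfl (fun y _ => step1 y), sum_fun_prod (fun n a => g n a)]
  apply Finset.prod_congr rfl; intro n _
  by_cases hn : n ∈ A
  · simp [hg, hn]
  · simp [hg, hn, Finset.sum_ite_eq' Finset.univ (0 : Fin d)]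

section Seg
variable {N d : ℕ} [NeZero d]

/-- Measurement operators of the segment measurement. -/
def segM (A : Finset (Fin N)) (B : Fin N → Fin d → Fin d → ℂ) (y : Fin N → Fin d) :
    Matrix (Fin N → Fin d) (Fin N → Fin d) ℂ :=
  Matrix.of fun s t => if ∀ n, n ∉ A → y n = 0 then
    ∏ n, (if n ∈ A then B n (y n) (s n) * (starRingEnd ℂ) (B n (y n) (t n))
      else if s n = t n then 1 else 0) else 0

lemma segDist_eq_mprob (ρ : Matrix (Fin N → Fin d) (Fin N → Fin d) ℂ)
    (A : Finset (Fin N)) (B : Fin N → Fin d → Fin d → ℂ) (y : Fin N → Fin d) :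
    segDist ρ A B y = mprob (segM A B y) ρ := by
  rw [segDist, mprob]
  by_cases hpin : ∀ n, n ∉ A → y n = 0
  · rw [if_pos hpin, segProb]
    congr 1
    apply Finset.sum_congr rfl; intro s _
    apply Finset.sum_congr rfl; intro t _
    rw [show segM A B y s t = ∏ n, (if n ∈ A then B n (y n) (s n)
      * (starRingEnd ℂ) (B n (y n) (t n)) else if s n = t n then 1 else 0) from by
        simp only [segM, Matrix.of_apply, if_pos hpin]]
  · rw [if_neg hpin]
    symm
    have : ∀ s t : Fin N → Fin d, segM A B y s t = 0 := by
      intro s t; simp only [segM, Matrix.of_apply, if_neg hpin]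
    simp [this]

lemma segM_gram {B : Fin N → Fin d → Fin d → ℂ} (hB : ∀ n, ONB (B n))
    (A : Finset (Fin N)) (y : Fin N → Fin d) : Gram (segM A B y) := by
  classical
  by_cases hpin : ∀ n, n ∉ A → y n = 0
  · set g : Fin N → Fin d → Fin d → ℂ := fun n a b =>
      if n ∈ A then (if a = 0 then B n (y n) b else 0) else (if a = b then 1 else 0) with hgdef
    refine ⟨Fin N → Fin d, inferInstance, fun r s => ∏ n, g n (r n) (s n), ?_⟩
    intro s t
    have expand : ∀ r : Fin N → Fin d,
        (∏ n, g n (r n) (s n)) * (starRingEnd ℂ) (∏ n, g n (r n) (t n))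
        = ∏ n, (g n (r n) (s n) * (starRingEnd ℂ) (g n (r n) (t n))) := by
      intro r
      rw [map_prod, Finset.prod_mul_distrib]
    rw [Finset.sum_congr rfl (fun r _ => expand r),
      sum_fun_prod (fun n a => g n a (s n) * (starRingEnd ℂ) (g n a (t n)))]
    rw [show segM A B y s t = ∏ n, (if n ∈ A then B n (y n) (s n)
      * (starRingEnd ℂ) (B n (y n) (t n)) else if s n = t n then 1 else 0) from by
        simp only [segM, Matrix.of_apply, if_pos hpin]]
    apply Finset.prod_congr rfl; intro n _
    by_cases hn : n ∈ A
    · rw [if_pos hn]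
      have : ∀ a : Fin d, g n a (s n) * (starRingEnd ℂ) (g n a (t n))
          = if a = 0 then B n (y n) (s n) * (starRingEnd ℂ) (B n (y n) (t n)) else 0 := by
        intro a
        by_cases ha : a = 0 <;> simp [hgdef, hn, ha]
      rw [Finset.sum_congr rfl (fun a _ => this a), Finset.sum_ite_eq' Finset.univ (0 : Fin d)]
      simp
    · rw [if_neg hn]
      have : ∀ a : Fin d, g n a (s n) * (starRingEnd ℂ) (g n a (t n))
          = if a = s n then (if a = t n then 1 else 0) else 0 := by
        intro a
        by_cases ha : a = s n <;> by_cases ha' : a = t n <;> simp [hgdef, hn, ha, ha']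
      rw [Finset.sum_congr rfl (fun a _ => this a), Finset.sum_ite_eq' Finset.univ (s n)]
      simp
  · have : segM A B y = 0 := by
      ext s t; simp only [segM, Matrix.of_apply, if_neg hpin, Matrix.zero_apply]
    rw [this]; exact gram_zero

lemma segM_sum {B : Fin N → Fin d → Fin d → ℂ} (hB : ∀ n, ONB (B n)) (A : Finset (Fin N)) :
    ∑ y, segM A B y = 1 := by
  classical
  ext s t
  rw [Matrix.sum_apply]
  calc ∑ y, segM A B y s t
      = ∑ y : Fin N → Fin d, if ∀ n, n ∉ A → y n = 0 then
          ∏ n, (if n ∈ A then B n (y n) (s n) * (starRingEnd ℂ) (B n (y n) (t n))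
            else if s n = t n then (1:ℂ) else 0) else 0 := rfl
    _ = ∏ n, (if n ∈ A then ∑ a, B n a (s n) * (starRingEnd ℂ) (B n a (t n))
          else if s n = t n then 1 else 0) :=
        pinned_sum A (fun n a => B n a (s n) * (starRingEnd ℂ) (B n a (t n)))
          (fun n => if s n = t n then 1 else 0)
    _ = ∏ n, (if s n = t n then (1:ℂ) else 0) := by
        apply Finset.prod_congr rfl; intro n _
        by_cases hn : n ∈ A
        · rw [if_pos hn, ONB_complete (hB n)]
        · rw [if_neg hn]
    _ = (1 : Matrix (Fin N → Fin d) (Fin N → Fin d) ℂ) s t := by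
        rw [prod_delta, Matrix.one_apply]

end Seg
end WD

namespace WD
section Pref
variable {N d : ℕ} [NeZero d]

/-- Measurement operators of the prefix-POVM-plus-segment measurement. -/
def prefM (m l : ℕ) {Z : Type} [Fintype Z]
    (E : Z → Matrix (Fin (min (m * l) N) → Fin d) (Fin (min (m * l) N) → Fin d) ℂ)
    (B : Fin N → Fin d → Fin d → ℂ) (zy : Z × (Fin N → Fin d)) :
    Matrix (Fin N → Fin d) (Fin N → Fin d) ℂ :=
  Matrix.of fun s t =>
    if ∀ n, n ∉ seg N m l → zy.2 n = 0 then
      E zy.1 (fun i => s (Fin.castLE (Nat.min_le_right _ _) i))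
        (fun i => t (Fin.castLE (Nat.min_le_right _ _) i)) *
      ∏ n, (if n ∈ seg N m l then B n (zy.2 n) (s n) * (starRingEnd ℂ) (B n (zy.2 n) (t n))
        else if (n : ℕ) < m * l then (1:ℂ) else if s n = t n then (1:ℂ) else 0)
    else 0

lemma prefSegDist_eq_mprob (ρ : Matrix (Fin N → Fin d) (Fin N → Fin d) ℂ) (m l : ℕ)
    {Z : Type} [Fintype Z]
    (E : Z → Matrix (Fin (min (m * l) N) → Fin d) (Fin (min (m * l) N) → Fin d) ℂ)
    (B : Fin N → Fin d → Fin d → ℂ) (zy : Z × (Fin N → Fin d)) :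
    prefSegDist ρ m l E B zy = mprob (prefM m l E B zy) ρ := by
  rw [prefSegDist, mprob]
  by_cases hpin : ∀ n, n ∉ seg N m l → zy.2 n = 0
  · rw [if_pos hpin, prefSegProb]
    congr 1
    apply Finset.sum_congr rfl; intro s _
    apply Finset.sum_congr rfl; intro t _
    rw [show prefM m l E B zy s t
        = E zy.1 (fun i => s (Fin.castLE (Nat.min_le_right _ _) i))
          (fun i => t (Fin.castLE (Nat.min_le_right _ _) i)) *
          ∏ n, (if n ∈ seg N m l then B n (zy.2 n) (s n) * (starRingEnd ℂ) (B n (zy.2 n) (t n))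
            else if (n : ℕ) < m * l then (1:ℂ) else if s n = t n then (1:ℂ) else 0) from by
      simp only [prefM, Matrix.of_apply, if_pos hpin]]
  · rw [if_neg hpin]
    symm
    have : ∀ s t : Fin N → Fin d, prefM m l E B zy s t = 0 := by
      intro s t; simp only [prefM, Matrix.of_apply, if_neg hpin]
    simp [this]

lemma prefM_gram (m l : ℕ) {Z : Type} [Fintype Z]
    {E : Z → Matrix (Fin (min (m * l) N) → Fin d) (Fin (min (m * l) N) → Fin d) ℂ}
    (hE : IsPOVM E) (B : Fin N → Fin d → Fin d → ℂ) (zy : Z × (Fin N → Fin d)) :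
    Gram (prefM m l E B zy) := by
  classical
  obtain ⟨z, y⟩ := zy
  by_cases hpin : ∀ n, n ∉ seg N m l → y n = 0
  · obtain ⟨C, hC⟩ : ∃ C, E z = Matrix.conjTranspose C * C := by
      open scoped MatrixOrder in
      obtain ⟨C, hC⟩ := CStarAlgebra.nonneg_iff_eq_star_mul_self.mp (hE.1 z).nonneg
      exact ⟨C, hC⟩
    set g : Fin N → Fin d → Fin d → ℂ := fun n a b =>
      if n ∈ seg N m l then (if a = 0 then B n (y n) b else 0)
      else if (n : ℕ) < m * l then (if a = 0 then 1 else 0) else (if a = b then 1 else 0)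
      with hgdef
    refine ⟨((Fin (min (m * l) N) → Fin d)) × (Fin N → Fin d), inferInstance,
      fun kr s => (starRingEnd ℂ) (C kr.1 (fun i => s (Fin.castLE (Nat.min_le_right _ _) i)))
        * ∏ n, g n (kr.2 n) (s n), ?_⟩
    intro s t
    rw [Fintype.sum_prod_type]
    have expand : ∀ (k : Fin (min (m * l) N) → Fin d) (r : Fin N → Fin d),
        ((starRingEnd ℂ) (C k (fun i => s (Fin.castLE (Nat.min_le_right _ _) i)))
          * ∏ n, g n (r n) (s n))
        * (starRingEnd ℂ) ((starRingEnd ℂ) (C k (fun i => t (Fin.castLE (Nat.min_le_right _ _) i)))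
          * ∏ n, g n (r n) (t n))
        = ((starRingEnd ℂ) (C k (fun i => s (Fin.castLE (Nat.min_le_right _ _) i)))
            * C k (fun i => t (Fin.castLE (Nat.min_le_right _ _) i)))
          * ∏ n, (g n (r n) (s n) * (starRingEnd ℂ) (g n (r n) (t n))) := by
      intro k r
      rw [map_mul, Complex.conj_conj, map_prod, Finset.prod_mul_distrib]
      ring
    calc prefM m l E B (z, y) s t
        = E z (fun i => s (Fin.castLE (Nat.min_le_right _ _) i))
            (fun i => t (Fin.castLE (Nat.min_le_right _ _) i)) *
          ∏ n, (if n ∈ seg N m l then B n (y n) (s n) * (starRingEnd ℂ) (B n (y n) (t n))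
            else if (n : ℕ) < m * l then (1:ℂ) else if s n = t n then (1:ℂ) else 0) := by
          simp only [prefM, Matrix.of_apply, if_pos hpin]
      _ = (∑ k, (starRingEnd ℂ) (C k (fun i => s (Fin.castLE (Nat.min_le_right _ _) i)))
            * C k (fun i => t (Fin.castLE (Nat.min_le_right _ _) i)))
          * ∏ n, ∑ a, (g n a (s n) * (starRingEnd ℂ) (g n a (t n))) := by
          congr 1
          · rw [hC, Matrix.mul_apply]
            apply Finset.sum_congr rfl; intro k _
            rw [Matrix.conjTranspose_apply]; rfl
          · apply Finset.prod_congr rfl; intro n _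
            by_cases hn : n ∈ seg N m l
            · rw [if_pos hn]
              have : ∀ a : Fin d, g n a (s n) * (starRingEnd ℂ) (g n a (t n))
                  = if a = 0 then B n (y n) (s n) * (starRingEnd ℂ) (B n (y n) (t n)) else 0 := by
                intro a; by_cases ha : a = 0 <;> simp [hgdef, hn, ha]
              rw [Finset.sum_congr rfl (fun a _ => this a),
                Finset.sum_ite_eq' Finset.univ (0 : Fin d)]
              simp
            · rw [if_neg hn]
              by_cases hml : (n : ℕ) < m * l
              · rw [if_pos hml]
                have : ∀ a : Fin d, g n a (s n) * (starRingEnd ℂ) (g n a (t n))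
                    = if a = 0 then 1 else 0 := by
                  intro a; by_cases ha : a = 0 <;> simp [hgdef, hn, hml, ha]
                rw [Finset.sum_congr rfl (fun a _ => this a),
                  Finset.sum_ite_eq' Finset.univ (0 : Fin d)]
                simp
              · rw [if_neg hml]
                have : ∀ a : Fin d, g n a (s n) * (starRingEnd ℂ) (g n a (t n))
                    = if a = s n then (if a = t n then (1:ℂ) else 0) else 0 := by
                  intro a
                  by_cases ha : a = s n <;> by_cases ha' : a = t n <;>
                    simp [hgdef, hn, hml, ha, ha']
                rw [Finset.sum_congr rfl (fun a _ => this a),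
                  Finset.sum_ite_eq' Finset.univ (s n)]
                simp
      _ = ∑ k, ∑ r : Fin N → Fin d,
            ((starRingEnd ℂ) (C k (fun i => s (Fin.castLE (Nat.min_le_right _ _) i)))
              * C k (fun i => t (Fin.castLE (Nat.min_le_right _ _) i)))
            * ∏ n, (g n (r n) (s n) * (starRingEnd ℂ) (g n (r n) (t n))) := by
          rw [← sum_fun_prod (fun n a => g n a (s n) * (starRingEnd ℂ) (g n a (t n))),
            Finset.sum_mul_sum]
      _ = ∑ k, ∑ r : Fin N → Fin d,
          ((starRingEnd ℂ) (C k (fun i => s (Fin.castLE (Nat.min_le_right _ _) i)))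
            * ∏ n, g n (r n) (s n))
          * (starRingEnd ℂ) ((starRingEnd ℂ) (C k (fun i => t (Fin.castLE (Nat.min_le_right _ _) i)))
            * ∏ n, g n (r n) (t n)) := by
          apply Finset.sum_congr rfl; intro k _
          exact Finset.sum_congr rfl fun r _ => (expand k r).symm
  · have : prefM m l E B (z, y) = 0 := by
      ext s t; simp only [prefM, Matrix.of_apply, if_neg hpin, Matrix.zero_apply]
    rw [this]; exact gram_zero


lemma prefM_sum (m l : ℕ) {Z : Type} [Fintype Z]
    {E : Z → Matrix (Fin (min (m * l) N) → Fin d) (Fin (min (m * l) N) → Fin d) ℂ}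
    (hE : IsPOVM E) {B : Fin N → Fin d → Fin d → ℂ} (hB : ∀ n, ONB (B n)) :
    ∑ zy : Z × (Fin N → Fin d), prefM m l E B zy = 1 := by
  classical
  ext s t
  rw [Matrix.sum_apply, Fintype.sum_prod_type]
  have inner : ∀ z : Z, ∑ y : Fin N → Fin d, prefM m l E B (z, y) s t
      = E z (fun i => s (Fin.castLE (Nat.min_le_right _ _) i))
          (fun i => t (Fin.castLE (Nat.min_le_right _ _) i))
        * ∏ n, (if n ∈ seg N m l then
            (if s n = t n then (1:ℂ) else 0)
          else if (n : ℕ) < m * l then (1:ℂ) else if s n = t n then (1:ℂ) else 0) := by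
    intro z
    have h1 : ∀ y : Fin N → Fin d, prefM m l E B (z, y) s t
        = E z (fun i => s (Fin.castLE (Nat.min_le_right _ _) i))
            (fun i => t (Fin.castLE (Nat.min_le_right _ _) i))
          * (if ∀ n, n ∉ seg N m l → y n = 0 then
              ∏ n, (if n ∈ seg N m l then B n (y n) (s n) * (starRingEnd ℂ) (B n (y n) (t n))
                else if (n : ℕ) < m * l then (1:ℂ) else if s n = t n then (1:ℂ) else 0)
            else 0) := by
      intro y
      by_cases hpin : ∀ n, n ∉ seg N m l → y n = 0
      · simp only [prefM, Matrix.of_apply, if_pos hpin]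
      · simp only [prefM, Matrix.of_apply, if_neg hpin, mul_zero]
    rw [Finset.sum_congr rfl (fun y _ => h1 y), ← Finset.mul_sum]
    congr 1
    rw [pinned_sum (seg N m l) (fun n a => B n a (s n) * (starRingEnd ℂ) (B n a (t n)))
      (fun n => if (n : ℕ) < m * l then (1:ℂ) else if s n = t n then (1:ℂ) else 0)]
    apply Finset.prod_congr rfl; intro n _
    by_cases hn : n ∈ seg N m l
    · rw [if_pos hn, if_pos hn, ONB_complete (hB n)]
    · rw [if_neg hn, if_neg hn]
  rw [Finset.sum_congr rfl (fun z _ => inner z), ← Finset.sum_mul]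
  have hEsum : ∑ z, E z (fun i => s (Fin.castLE (Nat.min_le_right (m*l) N) i))
      (fun i => t (Fin.castLE (Nat.min_le_right (m*l) N) i))
      = if (fun i => s (Fin.castLE (Nat.min_le_right (m*l) N) i))
          = (fun i => t (Fin.castLE (Nat.min_le_right (m*l) N) i)) then (1:ℂ) else 0 := by
    calc ∑ z, E z (fun i => s (Fin.castLE (Nat.min_le_right (m*l) N) i))
          (fun i => t (Fin.castLE (Nat.min_le_right (m*l) N) i))
        = (∑ z, E z) (fun i => s (Fin.castLE (Nat.min_le_right (m*l) N) i))
          (fun i => t (Fin.castLE (Nat.min_le_right (m*l) N) i)) := by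
          rw [Matrix.sum_apply]
      _ = _ := by rw [hE.2, Matrix.one_apply]
  rw [hEsum]
  by_cases hst : s = t
  · subst hst
    rw [if_pos rfl, one_mul, Matrix.one_apply_eq]
    apply Finset.prod_eq_one; intro n _
    by_cases hn : n ∈ seg N m l
    · rw [if_pos hn, if_pos rfl]
    · rw [if_neg hn]
      by_cases hml : (n : ℕ) < m * l
      · rw [if_pos hml]
      · rw [if_neg hml, if_pos rfl]
  · rw [Matrix.one_apply_ne hst]
    obtain ⟨n, hsn⟩ := Function.ne_iff.mp hst
    by_cases hml : (n : ℕ) < m * l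
    · have hpre : ¬ ((fun i => s (Fin.castLE (Nat.min_le_right (m*l) N) i))
          = (fun i => t (Fin.castLE (Nat.min_le_right (m*l) N) i))) := by
        intro hc
        have hi : (n : ℕ) < min (m * l) N := lt_min hml n.isLt
        have := congrFun hc ⟨(n : ℕ), hi⟩
        have hcast : Fin.castLE (Nat.min_le_right (m*l) N) ⟨(n : ℕ), hi⟩ = n := by
          apply Fin.ext; rfl
        rw [hcast] at this
        exact hsn this
      rw [if_neg hpre, zero_mul]
    · have : (∏ n, (if n ∈ seg N m l then (if s n = t n then (1:ℂ) else 0)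
          else if (n : ℕ) < m * l then (1:ℂ) else if s n = t n then (1:ℂ) else 0)) = 0 := by
        apply Finset.prod_eq_zero (Finset.mem_univ n)
        by_cases hn : n ∈ seg N m l
        · rw [if_pos hn, if_neg hsn]
        · rw [if_neg hn, if_neg hml, if_neg hsn]
      rw [this, mul_zero]

end Pref
end WD

namespace WD

lemma abs_sInf_range_sub_le {ι : Sort*} [Nonempty ι] (f g : ι → ℝ) {Δ : ℝ}
    (hf0 : ∀ i, 0 ≤ f i) (hg0 : ∀ i, 0 ≤ g i) (hfg : ∀ i, |f i - g i| ≤ Δ) :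
    |sInf (Set.range f) - sInf (Set.range g)| ≤ Δ := by
  have key : ∀ (u v : ι → ℝ), (∀ i, 0 ≤ u i) → (∀ i, u i ≤ v i + Δ) →
      sInf (Set.range u) ≤ sInf (Set.range v) + Δ := by
    intro u v hu0 huv
    have hbdd : BddBelow (Set.range u) := ⟨0, by rintro x ⟨i, rfl⟩; exact hu0 i⟩
    have h1 : ∀ i, sInf (Set.range u) - Δ ≤ v i := by
      intro i
      have := csInf_le hbdd (Set.mem_range_self i)
      linarith [huv i]
    have h2 := le_csInf (Set.range_nonempty v) (by rintro x ⟨i, rfl⟩; exact h1 i)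
    linarith
  have h1 := key f g hf0 (fun i => by have := abs_le.mp (hfg i); linarith)
  have h2 := key g f hg0 (fun i => by have := abs_le.mp (hfg i); linarith)
  rw [abs_le]; constructor <;> linarith

lemma setOf_eq_range {γ : Type*} (P : γ → Prop) (F : γ → ℝ) :
    {h : ℝ | ∃ B, P B ∧ h = F B} = Set.range (fun b : {B // P B} => F b.1) := by
  ext h
  constructor
  · rintro ⟨B, hP, rfl⟩; exact ⟨⟨B, hP⟩, rfl⟩
  · rintro ⟨⟨B, hP⟩, rfl⟩; exact ⟨B, hP, rfl⟩

/-- A protocol for the `L` bound (segment `m`). -/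
structure LP (N d m l : ℕ) where
  Z : Type
  fz : Fintype Z
  E : Z → Matrix (Fin (min (m * l) N) → Fin d) (Fin (min (m * l) N) → Fin d) ℂ
  Bb : Fin N → Fin d → Fin d → ℂ

def LPcond {N d m l : ℕ} (P : LP N d m l) : Prop :=
  (@IsPOVM P.Z _ P.fz _ _ P.E) ∧ ∀ n, ONB (P.Bb n)

def LPval {N d : ℕ} [NeZero d] (ρ : Matrix (Fin N → Fin d) (Fin N → Fin d) ℂ)
    {m l : ℕ} (P : LP N d m l) : ℝ :=
  @condShannon P.Z _ P.fz _ (@prefSegDist N d _ ρ m l P.Z P.fz P.E P.Bb)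

lemma lbound_set_eq_range {N d : ℕ} [NeZero d] (ρ : Matrix (Fin N → Fin d) (Fin N → Fin d) ℂ)
    (m l : ℕ) :
    {h : ℝ | ∃ (Z : Type) (_ : Fintype Z)
      (E : Z → Matrix (Fin (min (m * l) N) → Fin d) (Fin (min (m * l) N) → Fin d) ℂ)
      (B : Fin N → Fin d → Fin d → ℂ),
      IsPOVM E ∧ (∀ n, ONB (B n)) ∧
      h = condShannon (prefSegDist ρ m l E B)}
    = Set.range (fun q : {P : LP N d m l // LPcond P} => LPval ρ q.1) := by
  ext h
  constructor
  · rintro ⟨Z, instZ, E, B, hE, hB, rfl⟩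
    exact ⟨⟨⟨Z, instZ, E, B⟩, ⟨hE, hB⟩⟩, rfl⟩
  · rintro ⟨⟨⟨Z, instZ, E, B⟩, ⟨hE, hB⟩⟩, rfl⟩
    exact ⟨Z, instZ, E, B, hE, hB, rfl⟩

instance LPnonempty {N d m l : ℕ} : Nonempty {P : LP N d m l // LPcond P} := by
  refine ⟨⟨⟨Unit, inferInstance, fun _ => 1, fun n => fun a i => if a = i then 1 else 0⟩,
    ⟨⟨fun _ => Matrix.PosSemidef.one, ?_⟩, fun n => stdONB d⟩⟩⟩
  simp

end WD

namespace WD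
section Final
variable {N d : ℕ} [NeZero d]

lemma segDist_prob {ρ : Matrix (Fin N → Fin d) (Fin N → Fin d) ℂ} (hρ : IsDensity ρ)
    {B : Fin N → Fin d → Fin d → ℂ} (hB : ∀ n, ONB (B n)) (A : Finset (Fin N)) :
    (∀ y, 0 ≤ segDist ρ A B y) ∧ (∑ y, segDist ρ A B y = 1) := by
  constructor
  · intro y; rw [segDist_eq_mprob]
    exact mprob_nonneg (fun y => segM_gram hB A y) hρ.1 y
  · rw [Finset.sum_congr rfl (fun y _ => segDist_eq_mprob ρ A B y)]
    exact mprob_sum_one (segM_sum hB A) hρ.2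

lemma seg_shannon_cont {ρ ρ' : Matrix (Fin N → Fin d) (Fin N → Fin d) ℂ}
    (hρ : IsDensity ρ) (hρ' : IsDensity ρ')
    {B : Fin N → Fin d → Fin d → ℂ} (hB : ∀ n, ONB (B n)) (A : Finset (Fin N))
    {ν : ℝ} (hν0 : 0 ≤ ν) (hν2 : ν ≤ 2) (htr : trNorm (ρ - ρ') ≤ ν) :
    |shannon (segDist ρ A B) - shannon (segDist ρ' A B)|
      ≤ (Fintype.card (Fin N → Fin d)) * psiF ν := by
  obtain ⟨hp0, hp1⟩ := segDist_prob hρ hB A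
  obtain ⟨hq0, hq1⟩ := segDist_prob hρ' hB A
  have htv : ∑ y, |segDist ρ A B y - segDist ρ' A B y| ≤ ν := by
    calc ∑ y, |segDist ρ A B y - segDist ρ' A B y|
        = ∑ y, |mprob (segM A B y) (ρ - ρ')| := by
          apply Finset.sum_congr rfl; intro y _
          rw [segDist_eq_mprob, segDist_eq_mprob, mprob_sub]
      _ ≤ trNorm (ρ - ρ') :=
          abs_mprob_sum_le (fun y => segM_gram hB A y) (segM_sum hB A) (hρ.1.1.sub hρ'.1.1)
      _ ≤ ν := htr
  apply abs_shannon_sub_le hp0 (entry_le_one hp0 hp1) hq0 (entry_le_one hq0 hq1) ?_ hν2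
  intro y
  exact le_trans (Finset.single_le_sum
    (f := fun y => |segDist ρ A B y - segDist ρ' A B y|)
    (fun y _ => abs_nonneg _) (Finset.mem_univ y)) htv

lemma pref_prob {ρ : Matrix (Fin N → Fin d) (Fin N → Fin d) ℂ} (hρ : IsDensity ρ)
    (m l : ℕ) {Z : Type} [Fintype Z]
    {E : Z → Matrix (Fin (min (m * l) N) → Fin d) (Fin (min (m * l) N) → Fin d) ℂ}
    (hE : IsPOVM E) {B : Fin N → Fin d → Fin d → ℂ} (hB : ∀ n, ONB (B n)) :
    (∀ zy, 0 ≤ prefSegDist ρ m l E B zy) ∧ (∑ zy, prefSegDist ρ m l E B zy = 1) := by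
  constructor
  · intro zy; rw [prefSegDist_eq_mprob]
    exact mprob_nonneg (fun zy => prefM_gram m l hE B zy) hρ.1 zy
  · rw [Finset.sum_congr rfl (fun zy _ => prefSegDist_eq_mprob ρ m l E B zy)]
    exact mprob_sum_one (prefM_sum m l hE hB) hρ.2

lemma pref_cond_cont {ρ ρ' : Matrix (Fin N → Fin d) (Fin N → Fin d) ℂ}
    (hρ : IsDensity ρ) (hρ' : IsDensity ρ') (m l : ℕ) {Z : Type} [Fintype Z]
    {E : Z → Matrix (Fin (min (m * l) N) → Fin d) (Fin (min (m * l) N) → Fin d) ℂ}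
    (hE : IsPOVM E) {B : Fin N → Fin d → Fin d → ℂ} (hB : ∀ n, ONB (B n))
    {ν : ℝ} (hν0 : 0 ≤ ν) (hν1 : ν ≤ 1) (htr : trNorm (ρ - ρ') ≤ ν) :
    |condShannon (prefSegDist ρ m l E B) - condShannon (prefSegDist ρ' m l E B)|
      ≤ Real.log (Fintype.card (Fin N → Fin d)) * ν
        + (Fintype.card (Fin N → Fin d)) * psiF (2*ν) := by
  haveI : Nonempty (Fin N → Fin d) := ⟨fun _ => 0⟩
  obtain ⟨hp0, hp1⟩ := pref_prob hρ m l hE hB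
  obtain ⟨hq0, hq1⟩ := pref_prob hρ' m l hE hB
  have htv : ∑ zy, |prefSegDist ρ m l E B zy - prefSegDist ρ' m l E B zy| ≤ ν := by
    calc ∑ zy, |prefSegDist ρ m l E B zy - prefSegDist ρ' m l E B zy|
        = ∑ zy, |mprob (prefM m l E B zy) (ρ - ρ')| := by
          apply Finset.sum_congr rfl; intro zy _
          rw [prefSegDist_eq_mprob, prefSegDist_eq_mprob, mprob_sub]
      _ ≤ trNorm (ρ - ρ') :=
          abs_mprob_sum_le (fun zy => prefM_gram m l hE B zy) (prefM_sum m l hE hB)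
            (hρ.1.1.sub hρ'.1.1)
      _ ≤ ν := htr
  exact abs_condShannon_sub_le hp0 hp1 hq0 hq1 hν0 hν1 htv

lemma LPval_nonneg {ρ : Matrix (Fin N → Fin d) (Fin N → Fin d) ℂ} (hρ : IsDensity ρ)
    {m l : ℕ} {P : LP N d m l} (hP : LPcond P) : 0 ≤ LPval ρ P := by
  letI := P.fz
  exact condShannon_nonneg_aux (pref_prob hρ m l hP.1 hP.2).1

lemma LPval_cont {ρ ρ' : Matrix (Fin N → Fin d) (Fin N → Fin d) ℂ}
    (hρ : IsDensity ρ) (hρ' : IsDensity ρ')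
    {m l : ℕ} {P : LP N d m l} (hP : LPcond P)
    {ν : ℝ} (hν0 : 0 ≤ ν) (hν1 : ν ≤ 1) (htr : trNorm (ρ - ρ') ≤ ν) :
    |LPval ρ P - LPval ρ' P|
      ≤ Real.log (Fintype.card (Fin N → Fin d)) * ν
        + (Fintype.card (Fin N → Fin d)) * psiF (2*ν) := by
  letI := P.fz
  exact pref_cond_cont hρ hρ' m l hP.1 hP.2 hν0 hν1 htr

end Final
end WD

set_option maxHeartbeats 2000000 in
/-- Continuity of the upper and lower bounds of the work deficit density in the state with
respect to the trace distance: if `‖ρ − ρ′‖_tr ≤ ν` then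
`|U_l(ρ) − U_l(ρ′)| ≤ Õ(ν)` and `|L_l(ρ) − L_l(ρ′)| ≤ Õ(ν)`, with `Õ(ν) = O(ν ln ν)`
realized by the bound `C·ν·(1 − ln ν)` for a constant `C` (depending only on `N`, `d`, `l`). -/
theorem bounds_continuous_in_state {N d : ℕ} [NeZero d] (l : ℕ) (hl : 0 < l) (hdvd : l ∣ N) :
    ∃ C > (0 : ℝ), ∀ (ρ ρ' : Matrix (Fin N → Fin d) (Fin N → Fin d) ℂ) (ν : ℝ),
      IsDensity ρ → IsDensity ρ' → 0 < ν → ν ≤ 1 → trNorm (ρ - ρ') ≤ ν →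
      |Ubound ρ l - Ubound ρ' l| ≤ C * ν * (1 - Real.log ν) ∧
      |Lbound ρ l - Lbound ρ' l| ≤ C * ν * (1 - Real.log ν) := by
  classical
  set K : ℝ := (Fintype.card (Fin N → Fin d) : ℝ) with hKdef
  have hK1 : (1:ℝ) ≤ K := by
    rw [hKdef]; exact_mod_cast Fintype.card_pos
  have hlogK : 0 ≤ Real.log K := Real.log_nonneg hK1
  clear_value K
  have hm0 : (0:ℝ) ≤ ((N / l : ℕ) : ℝ) := Nat.cast_nonneg _
  refine ⟨(((N / l : ℕ) : ℝ) + 1) * (Real.log K + 6 * K) + 1, by nlinarith, ?_⟩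
  intro ρ ρ' ν hρ hρ' hν0 hν1 htr
  set C : ℝ := (((N / l : ℕ) : ℝ) + 1) * (Real.log K + 6 * K) + 1 with hCdef
  have hC1 : (1:ℝ) ≤ C := by rw [hCdef]; nlinarith
  clear_value C
  set Ev : ℝ := ν * (1 - Real.log ν) with hEv
  clear_value Ev
  have hlogν : Real.log ν ≤ 0 := Real.log_nonpos hν0.le hν1
  have hνE : ν ≤ Ev := by rw [hEv]; nlinarith
  have hEv0 : 0 ≤ Ev := le_trans hν0.le hνE
  have hν2 : ν ≤ 2 := by linarith
  have hψ : WD.psiF ν ≤ 2 * Ev := by rw [WD.psiF, hEv]; nlinarith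
  have hψ0 : 0 ≤ WD.psiF ν := WD.psiF_nonneg hν0.le hν2
  have hψ2 : WD.psiF (2*ν) ≤ 4 * Ev := by
    rw [WD.psiF, Real.log_mul two_ne_zero (ne_of_gt hν0), hEv]
    have h2 : 0 ≤ Real.log 2 := Real.log_nonneg one_le_two
    nlinarith
  have hgoalrw : C * ν * (1 - Real.log ν) = C * Ev := by rw [hEv]; ring
  by_cases hN : N = 0
  · subst hN
    have hU0 : ∀ σ : Matrix (Fin 0 → Fin d) (Fin 0 → Fin d) ℂ, Ubound σ l = 0 := by
      intro σ; rw [Ubound]; norm_num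
    have hL0 : ∀ σ : Matrix (Fin 0 → Fin d) (Fin 0 → Fin d) ℂ, Lbound σ l = 0 := by
      intro σ; rw [Lbound]; norm_num
    rw [hU0, hU0, hL0, hL0, hgoalrw]
    norm_num
    exact mul_nonneg (by linarith) hEv0
  · have hN1 : (1:ℝ) ≤ (N:ℝ) := by exact_mod_cast Nat.one_le_iff_ne_zero.mpr hN
    have hNpos : (0:ℝ) < (N:ℝ) := by linarith
    have hinv0 : (0:ℝ) ≤ 1/(N:ℝ) := by positivity
    have hinv1 : 1/(N:ℝ) ≤ 1 := by rw [div_le_one hNpos]; linarith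
    set SU : Matrix (Fin N → Fin d) (Fin N → Fin d) ℂ → ℕ → ℝ := fun σ m =>
      sInf {h : ℝ | ∃ B : Fin N → Fin d → Fin d → ℂ,
        (∀ n, ONB (B n)) ∧ h = shannon (segDist σ (seg N m l) B)} with hSUdef
    set SL : Matrix (Fin N → Fin d) (Fin N → Fin d) ℂ → ℕ → ℝ := fun σ m =>
      sInf {h : ℝ | ∃ (Z : Type) (_ : Fintype Z)
        (E : Z → Matrix (Fin (min (m * l) N) → Fin d) (Fin (min (m * l) N) → Fin d) ℂ)
        (B : Fin N → Fin d → Fin d → ℂ),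
        IsPOVM E ∧ (∀ n, ONB (B n)) ∧
        h = condShannon (prefSegDist σ m l E B)} with hSLdef
    have hUf : ∀ σ, Ubound σ l
        = (1/(N:ℝ)) * ((∑ m ∈ Finset.range (N/l), SU σ m) - vN σ) := fun σ => rfl
    have hLf : ∀ σ, Lbound σ l
        = (1/(N:ℝ)) * ((∑ m ∈ Finset.range (N/l), SL σ m) - vN σ) := fun σ => rfl
    clear_value SU SL
    have hUseg : ∀ m : ℕ, |SU ρ m - SU ρ' m| ≤ K * WD.psiF ν := by
      intro m
      rw [hSUdef]
      simp only
      rw [WD.setOf_eq_range (fun B : Fin N → Fin d → Fin d → ℂ => ∀ n, ONB (B n))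
          (fun B => shannon (segDist ρ (seg N m l) B)),
        WD.setOf_eq_range (fun B : Fin N → Fin d → Fin d → ℂ => ∀ n, ONB (B n))
          (fun B => shannon (segDist ρ' (seg N m l) B))]
      haveI : Nonempty {B : Fin N → Fin d → Fin d → ℂ // ∀ n, ONB (B n)} :=
        ⟨⟨fun _ a i => if a = i then 1 else 0, fun _ => WD.stdONB d⟩⟩
      apply WD.abs_sInf_range_sub_le
      · intro b; obtain ⟨h0, h1⟩ := WD.segDist_prob hρ b.2 (seg N m l)
        exact WD.shannon_nonneg h0 (WD.entry_le_one h0 h1)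
      · intro b; obtain ⟨h0, h1⟩ := WD.segDist_prob hρ' b.2 (seg N m l)
        exact WD.shannon_nonneg h0 (WD.entry_le_one h0 h1)
      · intro b
        rw [hKdef]
        exact WD.seg_shannon_cont hρ hρ' b.2 (seg N m l) hν0.le hν2 htr
    have hLseg : ∀ m : ℕ, |SL ρ m - SL ρ' m| ≤ Real.log K * ν + K * WD.psiF (2*ν) := by
      intro m
      rw [hSLdef]
      simp only
      rw [WD.lbound_set_eq_range ρ m l, WD.lbound_set_eq_range ρ' m l]
      apply WD.abs_sInf_range_sub_le
      · intro q; exact WD.LPval_nonneg hρ q.2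
      · intro q; exact WD.LPval_nonneg hρ' q.2
      · intro q
        rw [hKdef]
        exact WD.LPval_cont hρ hρ' q.2 hν0.le hν1 htr
    have hvN : |vN ρ - vN ρ'| ≤ K * WD.psiF ν := by
      rw [hKdef]
      exact WD.abs_vN_sub_le hρ hρ' hν0.le hν2 htr
    have hcard : ((Finset.range (N/l)).card : ℝ) = ((N / l : ℕ) : ℝ) := by
      rw [Finset.card_range]
    constructor
    · -- Ubound
      rw [hgoalrw]
      have hdiff : Ubound ρ l - Ubound ρ' l
          = (1/(N:ℝ)) * ((∑ m ∈ Finset.range (N/l), (SU ρ m - SU ρ' m)) - (vN ρ - vN ρ')) := by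
        rw [hUf, hUf, ← mul_sub]
        congr 1
        rw [Finset.sum_sub_distrib]
        ring
      calc |Ubound ρ l - Ubound ρ' l|
          = (1/(N:ℝ)) * |(∑ m ∈ Finset.range (N/l), (SU ρ m - SU ρ' m)) - (vN ρ - vN ρ')| := by
            rw [hdiff, abs_mul, abs_of_nonneg hinv0]
        _ ≤ 1 * |(∑ m ∈ Finset.range (N/l), (SU ρ m - SU ρ' m)) - (vN ρ - vN ρ')| :=
            mul_le_mul_of_nonneg_right hinv1 (abs_nonneg _)
        _ ≤ |∑ m ∈ Finset.range (N/l), (SU ρ m - SU ρ' m)| + |vN ρ - vN ρ'| := by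
            rw [one_mul]; exact abs_sub _ _
        _ ≤ ((N / l : ℕ) : ℝ) * (K * WD.psiF ν) + K * WD.psiF ν := by
            apply add_le_add ?_ hvN
            calc |∑ m ∈ Finset.range (N/l), (SU ρ m - SU ρ' m)|
                ≤ ∑ m ∈ Finset.range (N/l), |SU ρ m - SU ρ' m| :=
                  Finset.abs_sum_le_sum_abs _ _
              _ ≤ ∑ _m ∈ Finset.range (N/l), K * WD.psiF ν :=
                  Finset.sum_le_sum (fun m _ => hUseg m)
              _ = ((N / l : ℕ) : ℝ) * (K * WD.psiF ν) := by
                  rw [Finset.sum_const, nsmul_eq_mul, hcard]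
        _ ≤ C * Ev := by
            have h2 : K * WD.psiF ν ≤ K * (2 * Ev) :=
              mul_le_mul_of_nonneg_left hψ (by linarith)
            have h3 : ((N / l : ℕ) : ℝ) * (K * WD.psiF ν)
                ≤ ((N / l : ℕ) : ℝ) * (K * (2 * Ev)) :=
              mul_le_mul_of_nonneg_left h2 hm0
            rw [hCdef]
            nlinarith [mul_nonneg hm0 hEv0, mul_nonneg (mul_nonneg hm0 hlogK) hEv0,
              mul_nonneg hlogK hEv0,
              mul_nonneg (mul_nonneg hm0 (by linarith : (0:ℝ) ≤ K)) hEv0,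
              mul_nonneg (by linarith : (0:ℝ) ≤ K) hEv0]
    · -- Lbound
      rw [hgoalrw]
      have hdiff : Lbound ρ l - Lbound ρ' l
          = (1/(N:ℝ)) * ((∑ m ∈ Finset.range (N/l), (SL ρ m - SL ρ' m)) - (vN ρ - vN ρ')) := by
        rw [hLf, hLf, ← mul_sub]
        congr 1
        rw [Finset.sum_sub_distrib]
        ring
      calc |Lbound ρ l - Lbound ρ' l|
          = (1/(N:ℝ)) * |(∑ m ∈ Finset.range (N/l), (SL ρ m - SL ρ' m)) - (vN ρ - vN ρ')| := by
            rw [hdiff, abs_mul, abs_of_nonneg hinv0]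
        _ ≤ 1 * |(∑ m ∈ Finset.range (N/l), (SL ρ m - SL ρ' m)) - (vN ρ - vN ρ')| :=
            mul_le_mul_of_nonneg_right hinv1 (abs_nonneg _)
        _ ≤ |∑ m ∈ Finset.range (N/l), (SL ρ m - SL ρ' m)| + |vN ρ - vN ρ'| := by
            rw [one_mul]; exact abs_sub _ _
        _ ≤ ((N / l : ℕ) : ℝ) * (Real.log K * ν + K * WD.psiF (2*ν)) + K * WD.psiF ν := by
            apply add_le_add ?_ hvN
            calc |∑ m ∈ Finset.range (N/l), (SL ρ m - SL ρ' m)|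
                ≤ ∑ m ∈ Finset.range (N/l), |SL ρ m - SL ρ' m| :=
                  Finset.abs_sum_le_sum_abs _ _
              _ ≤ ∑ _m ∈ Finset.range (N/l), (Real.log K * ν + K * WD.psiF (2*ν)) :=
                  Finset.sum_le_sum (fun m _ => hLseg m)
              _ = ((N / l : ℕ) : ℝ) * (Real.log K * ν + K * WD.psiF (2*ν)) := by
                  rw [Finset.sum_const, nsmul_eq_mul, hcard]
        _ ≤ C * Ev := by
            have ha : Real.log K * ν ≤ Real.log K * Ev := mul_le_mul_of_nonneg_left hνE hlogK
            have hb : K * WD.psiF (2*ν) ≤ K * (4*Ev) :=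
              mul_le_mul_of_nonneg_left hψ2 (by linarith)
            have hd : ((N / l : ℕ) : ℝ) * (Real.log K * ν + K * WD.psiF (2*ν))
                ≤ ((N / l : ℕ) : ℝ) * (Real.log K * Ev + K*(4*Ev)) :=
              mul_le_mul_of_nonneg_left (add_le_add ha hb) hm0
            have he : K * WD.psiF ν ≤ K * (2 * Ev) :=
              mul_le_mul_of_nonneg_left hψ (by linarith)
            rw [hCdef]
            nlinarith [mul_nonneg hlogK hEv0,
              mul_nonneg (mul_nonneg hm0 (by linarith : (0:ℝ) ≤ K)) hEv0,
              mul_nonneg (by linarith : (0:ℝ) ≤ K) hEv0,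
              mul_nonneg (mul_nonneg hm0 hlogK) hEv0]
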